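/- arXiv:1302.5033 — 4 statements merged into one kernel-verified Lean document; each statement's English description precedes it below -/
import Mathlib

section
/- Let n ≥ 1 and let m be an integer with 1 ≤ m ≤ n−1. Then the function s ↦ (π / sin(πs/2)) · ζ^{H*}_n(−s) / (2n)!, defined for s near 2m with s ≠ 2m, tends to a finite limit as s → 2m; that is, the meromorphic extension of L_n(s) = ∫_0^∞ x^{s−1}/H*_n(x) dx is pole-free at the points s = 2m with 1 ≤ m ≤ n−1. -/
open Filter

/-- The approximate eta function `ζ^{H*}_n(s) = ∑_{k=1}^n (-1)^{k-1} C(2n, n+k) k^{-s}`. -/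
noncomputable def zetaHstar (n : ℕ) (s : ℂ) : ℂ :=
  ∑ k ∈ Finset.Icc 1 n, (-1 : ℂ) ^ (k - 1) * (Nat.choose (2 * n) (n + k) : ℂ) * (k : ℂ) ^ (-s)


lemma fwdDiff_pow_eq_zero : ∀ p : ℕ, ∀ d : ℕ, d < p →
    (fwdDiff (1:ℕ))^[p] (fun x : ℕ => (x : ℂ) ^ d) = 0 := by
  intro p
  induction p with
  | zero => intro d hd; omega
  | succ p IH =>
    intro d hd
    rw [Function.iterate_succ_apply]
    have h1 : fwdDiff (1:ℕ) (fun x : ℕ => (x : ℂ) ^ d)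
        = ∑ j ∈ Finset.range d, ((d.choose j : ℂ)) • (fun x : ℕ => (x : ℂ) ^ j) := by
      funext x
      simp only [fwdDiff, Finset.sum_apply, Pi.smul_apply, smul_eq_mul]
      push_cast
      rw [add_pow, Finset.sum_range_succ]
      simp [mul_comm]
    rw [h1, fwdDiff_iter_finset_sum]
    refine Finset.sum_eq_zero fun j hj => ?_
    rw [fwdDiff_iter_const_smul, IH j (lt_of_lt_of_le (Finset.mem_range.mp hj) (Nat.lt_succ_iff.mp hd)), smul_zero]

lemma key_sum (n m : ℕ) (hm1 : 1 ≤ m) (hmn : m < n) :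
    ∑ k ∈ Finset.Icc 1 n, (-1 : ℂ) ^ (k - 1) * (Nat.choose (2 * n) (n + k) : ℂ) * (k : ℂ) ^ (2 * m) = 0 := by
  set f : ℕ → ℂ := fun x => ((x : ℂ) - n) ^ (2 * m) with hfdef
  have hf : (fwdDiff (1:ℕ))^[2 * n] f = 0 := by
    have hexp : f = ∑ d ∈ Finset.range (2 * m + 1),
        (((-(n:ℂ)) ^ (2 * m - d) * ((2 * m).choose d : ℂ))) • (fun x : ℕ => (x : ℂ) ^ d) := by
      funext x
      simp only [hfdef, Finset.sum_apply, Pi.smul_apply, smul_eq_mul]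
      rw [sub_eq_add_neg, add_pow]
      exact Finset.sum_congr rfl fun d _ => by ring
    rw [hexp, fwdDiff_iter_finset_sum]
    refine Finset.sum_eq_zero fun d hd => ?_
    rw [fwdDiff_iter_const_smul, fwdDiff_pow_eq_zero (2 * n) d (by have := Finset.mem_range.mp hd; omega), smul_zero]
  have h0 : (∑ k ∈ Finset.range (2 * n + 1),
      ((-1 : ℤ) ^ (2 * n - k) * ((2 * n).choose k : ℤ)) • f (0 + k • 1)) = 0 := by
    rw [← fwdDiff_iter_eq_sum_shift, hf]; rfl
  -- simplify the smul and the argument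
  have h0' : (∑ k ∈ Finset.range (2 * n + 1),
      (-1 : ℂ) ^ (2 * n - k) * ((2 * n).choose k : ℂ) * ((k : ℂ) - n) ^ (2 * m)) = 0 := by
    rw [← h0]
    refine Finset.sum_congr rfl fun k _ => ?_
    simp [zsmul_eq_mul, hfdef, mul_assoc]
  set c : ℕ → ℂ := fun k => (-1 : ℂ) ^ (2 * n - k) * ((2 * n).choose k : ℂ) * ((k : ℂ) - n) ^ (2 * m) with hcdef
  have hsplit : ∑ k ∈ Finset.range (2 * n + 1), c k
      = ∑ k ∈ Finset.range (n + 1), c k + ∑ k ∈ Finset.Ico (n + 1) (2 * n + 1), c k := by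
    rw [Finset.range_eq_Ico,
      ← Finset.sum_Ico_consecutive c (by omega : 0 ≤ n + 1) (by omega : n + 1 ≤ 2 * n + 1), ← Finset.range_eq_Ico]
  have hcn : c n = 0 := by
    simp only [hcdef, sub_self]
    rw [zero_pow (by omega : 2 * m ≠ 0), mul_zero]
  have h1 : ∑ k ∈ Finset.range (n + 1), c k = ∑ j ∈ Finset.Icc 1 n, c (n - j) := by
    rw [Finset.sum_range_succ, hcn, add_zero]
    exact Finset.sum_nbij' (fun k => n - k) (fun j => n - j)
      (fun k hk => by simp only [Finset.mem_range] at hk; simp only [Finset.mem_Icc]; omega)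
      (fun j hj => by simp only [Finset.mem_Icc] at hj; simp only [Finset.mem_range]; omega)
      (fun k hk => by simp only [Finset.mem_range] at hk; show n - (n - k) = k; omega)
      (fun j hj => by simp only [Finset.mem_Icc] at hj; show n - (n - j) = j; omega)
      (fun k hk => by simp only [Finset.mem_range] at hk; show c k = c (n - (n - k)); congr 1; omega)
  have h2 : ∑ k ∈ Finset.Ico (n + 1) (2 * n + 1), c k = ∑ j ∈ Finset.Icc 1 n, c (n + j) := by
    exact Finset.sum_nbij' (fun k => k - n) (fun j => n + j)
      (fun k hk => by simp only [Finset.mem_Ico] at hk; simp only [Finset.mem_Icc]; omega)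
      (fun j hj => by simp only [Finset.mem_Icc] at hj; simp only [Finset.mem_Ico]; omega)
      (fun k hk => by simp only [Finset.mem_Ico] at hk; show n + (k - n) = k; omega)
      (fun j hj => by simp only [Finset.mem_Icc] at hj; show (n + j) - n = j; omega)
      (fun k hk => by simp only [Finset.mem_Ico] at hk; show c k = c (n + (k - n)); congr 1; omega)
  have hsym : ∀ j ∈ Finset.Icc 1 n, c (n - j) = c (n + j) := by
    intro j hj
    simp only [Finset.mem_Icc] at hj
    simp only [hcdef]
    congr 1
    · congr 1
      · rw [show 2 * n - (n - j) = (2 * n - (n + j)) + 2 * j by omega, pow_add, pow_mul,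
          neg_one_sq, one_pow, mul_one]
      · rw [show (n - j : ℕ) = 2 * n - (n + j) by omega, Nat.choose_symm (by omega)]
    · rw [Nat.cast_sub hj.2]
      push_cast
      rw [show ((n : ℂ) - j - n) = -(j : ℂ) by ring, show ((n : ℂ) + j - n) = (j : ℂ) by ring,
        (even_two_mul m).neg_pow]
  have hA : ∑ j ∈ Finset.Icc 1 n, c (n + j) = 0 := by
    have : (2 : ℂ) * ∑ j ∈ Finset.Icc 1 n, c (n + j) = 0 := by
      rw [two_mul]
      nth_rewrite 1 [← Finset.sum_congr rfl hsym]
      rw [← h1, ← h2, ← hsplit, h0']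
    have h2ne : (2 : ℂ) ≠ 0 := two_ne_zero
    exact (mul_eq_zero.mp this).resolve_left h2ne
  calc ∑ k ∈ Finset.Icc 1 n, (-1 : ℂ) ^ (k - 1) * ((2 * n).choose (n + k) : ℂ) * (k : ℂ) ^ (2 * m)
      = (-1 : ℂ) ^ (n - 1) * ∑ j ∈ Finset.Icc 1 n, c (n + j) := by
        rw [Finset.mul_sum]
        refine Finset.sum_congr rfl fun k hk => ?_
        simp only [Finset.mem_Icc] at hk
        simp only [hcdef]
        have e1 : ((n + k : ℕ) : ℂ) - (n : ℂ) = (k : ℂ) := by push_cast; ring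
        rw [e1, ← mul_assoc, ← mul_assoc, ← pow_add,
          show (n - 1) + (2 * n - (n + k)) = (k - 1) + 2 * (n - k) by omega, pow_add]
        norm_num [pow_mul]
    _ = 0 := by rw [hA, mul_zero]

lemma cos_nat_pi (m : ℕ) : Complex.cos ((m : ℂ) * Real.pi) = (-1) ^ m := by
  induction m with
  | zero => simp
  | succ m IH =>
    have : ((m + 1 : ℕ) : ℂ) * Real.pi = (m : ℂ) * Real.pi + Real.pi := by push_cast; ring
    rw [this, Complex.cos_add_pi, IH, pow_succ]
    ring

/-- For `n ≥ 1` and `1 ≤ m ≤ n-1`, the meromorphic extension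
`s ↦ (π / sin(πs/2)) · ζ^{H*}_n(-s) / (2n)!` of `L_n` is pole-free at `s = 2m`:
it tends to a finite limit as `s → 2m` (with `s ≠ 2m`). -/
theorem meromorphic_extension_pole_free (n m : ℕ) (hn : 1 ≤ n) (hm1 : 1 ≤ m)
    (hm2 : m ≤ n - 1) :
    ∃ L : ℂ, Filter.Tendsto
      (fun s : ℂ => (Real.pi : ℂ) / Complex.sin ((Real.pi : ℂ) * s / 2) *
        zetaHstar n (-s) / (Nat.factorial (2 * n) : ℂ))
      (nhdsWithin ((2 * m : ℕ) : ℂ) {((2 * m : ℕ) : ℂ)}ᶜ) (nhds L) := by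
  have hmn : m < n := by omega
  set s0 : ℂ := ((2 * m : ℕ) : ℂ) with hs0
  set N : ℂ → ℂ := fun s => zetaHstar n (-s) with hNdef
  set D : ℂ → ℂ := fun s => Complex.sin ((Real.pi : ℂ) * s / 2) with hDdef
  have hNfun : N = fun s => ∑ k ∈ Finset.Icc 1 n,
      (-1 : ℂ) ^ (k - 1) * (Nat.choose (2 * n) (n + k) : ℂ) * (k : ℂ) ^ s := by
    funext s; simp [hNdef, zetaHstar, neg_neg]
  have hN : DifferentiableAt ℂ N s0 := by
    rw [hNfun]
    apply DifferentiableAt.fun_sum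
    intro k hk
    have hk0 : (k : ℂ) ≠ 0 := by
      simp only [Finset.mem_Icc] at hk
      exact Nat.cast_ne_zero.mpr (by omega)
    exact (differentiableAt_const _).mul (differentiableAt_id.const_cpow (Or.inl hk0))
  have hN0 : N s0 = 0 := by
    have := key_sum n m hm1 hmn
    rw [hNfun]
    rw [← this]
    refine Finset.sum_congr rfl fun k hk => ?_
    rw [hs0, Complex.cpow_natCast]
  have hD : DifferentiableAt ℂ D s0 := by
    apply Complex.differentiable_sin.differentiableAt.comp
    exact (differentiableAt_id.const_mul _).div_const 2
  have hpis : (Real.pi : ℂ) * s0 / 2 = (m : ℂ) * Real.pi := by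
    rw [hs0]; push_cast; ring
  have hD0 : D s0 = 0 := by
    rw [hDdef]; simp only
    rw [hpis]
    exact_mod_cast Complex.sin_nat_mul_pi m
  have hDD : HasDerivAt D (Complex.cos ((Real.pi : ℂ) * s0 / 2) * ((Real.pi : ℂ) / 2)) s0 := by
    have h1 : HasDerivAt (fun s : ℂ => (Real.pi : ℂ) * s / 2) ((Real.pi : ℂ) / 2) s0 := by
      simpa using ((hasDerivAt_id s0).const_mul (Real.pi : ℂ)).div_const 2
    exact (Complex.hasDerivAt_sin _).comp s0 h1
  have hD' : deriv D s0 = (-1) ^ m * ((Real.pi : ℂ) / 2) := by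
    rw [hDD.deriv, hpis, cos_nat_pi]
  have hD'ne : deriv D s0 ≠ 0 := by
    rw [hD']
    apply mul_ne_zero (pow_ne_zero _ (neg_ne_zero.mpr one_ne_zero))
    simpa using Complex.ofReal_ne_zero.mpr Real.pi_ne_zero
  have hfact : ((Nat.factorial (2 * n) : ℂ)) ≠ 0 := by
    exact_mod_cast Nat.factorial_ne_zero (2 * n)
  set L : ℂ := (Real.pi : ℂ) * deriv N s0 / (deriv D s0 * (Nat.factorial (2 * n) : ℂ)) with hL
  refine ⟨L, ?_⟩
  have t1 : Tendsto (dslope N s0) (nhds s0) (nhds (deriv N s0)) :=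
    (dslope_same N s0) ▸ (continuousAt_dslope_same.mpr hN)
  have t2 : Tendsto (dslope D s0) (nhds s0) (nhds (deriv D s0)) :=
    (dslope_same D s0) ▸ (continuousAt_dslope_same.mpr hD)
  have htG : Tendsto (fun s => (Real.pi : ℂ) * dslope N s0 s /
      (dslope D s0 s * (Nat.factorial (2 * n) : ℂ))) (nhds s0) (nhds L) :=
    (tendsto_const_nhds.mul t1).div (t2.mul tendsto_const_nhds) (mul_ne_zero hD'ne hfact)
  refine Tendsto.congr' ?_ (htG.mono_left nhdsWithin_le_nhds)
  filter_upwards [self_mem_nhdsWithin] with s hs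
  have hsne : s ≠ s0 := hs
  have hu : s - s0 ≠ 0 := sub_ne_zero.mpr hsne
  rw [dslope_of_ne _ hsne, dslope_of_ne _ hsne, slope_def_field, slope_def_field, hN0, hD0,
    sub_zero, sub_zero]
  show (Real.pi : ℂ) * (N s / (s - s0)) / (D s / (s - s0) * (Nat.factorial (2 * n) : ℂ))
      = (Real.pi : ℂ) / D s * N s / (Nat.factorial (2 * n) : ℂ)
  by_cases hDs : D s = 0
  · simp [hDs]
  · field_simp
end

section
/- Let n ≥ 0 and let s be a complex number with 0 < Re s < n+1 and sin(πs) ≠ 0. Then ∫_0^∞ x^{s−1} / H_n(x) dx = (π / sin(πs)) · η_n(1−s) / n!, i.e. ∫_0^∞ x^{s−1} / ∏_{k=1}^{n+1}(x+k) dx = (π / (sin(πs)·n!)) · ∑_{k=0}^{n} (−1)^{k} · C(n, k) · (k+1)^{s−1}. -/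
open Real MeasureTheory Set Complex


lemma beta_refl {s : ℂ} (h0 : 0 < s.re) (h1 : s.re < 1) :
    Complex.betaIntegral s (1 - s) = (Real.pi : ℂ) / Complex.sin ((Real.pi : ℂ) * s) := by
  have ht : 0 < (1 - s).re := by
    simp only [Complex.sub_re, Complex.one_re]; linarith
  have h := Complex.Gamma_mul_Gamma_eq_betaIntegral h0 ht
  rw [add_sub_cancel, Complex.Gamma_one, one_mul] at h
  rw [← h, Complex.Gamma_mul_Gamma_one_sub]

lemma integral_cpow_div_add (a : ℝ) (ha : 0 < a) {s : ℂ} (h0 : 0 < s.re) (h1 : s.re < 1) :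
    ∫ x in Ioi (0 : ℝ), (x : ℂ) ^ (s - 1) / ((x : ℂ) + (a : ℂ))
      = (Real.pi : ℂ) / Complex.sin ((Real.pi : ℂ) * s) * (a : ℂ) ^ (s - 1) := by
  set f : ℝ → ℝ := fun t => a * t / (1 - t) with hf
  have himg : f '' Ioo (0:ℝ) 1 = Ioi (0:ℝ) := by
    ext y
    constructor
    · rintro ⟨t, ⟨ht0, ht1⟩, rfl⟩
      exact div_pos (mul_pos ha ht0) (by linarith)
    · intro hy
      have hy' : (0:ℝ) < y := hy
      refine ⟨y / (a + y), ⟨div_pos hy' (by linarith), ?_⟩, ?_⟩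
      · rw [div_lt_one (by linarith)]; linarith
      · have hay : a + y ≠ 0 := by positivity
        simp only [hf]
        field_simp [hf, ha.ne']
        try ring
  have hderiv : ∀ t ∈ Ioo (0:ℝ) 1,
      HasDerivWithinAt f (a / (1 - t) ^ 2) (Ioo (0:ℝ) 1) t := by
    intro t ht
    have hne : (1:ℝ) - t ≠ 0 := by have h2 := ht.2; intro h; linarith
    have h1 : HasDerivAt (fun t : ℝ => a * t) a t := by
      simpa using (hasDerivAt_id t).const_mul a
    have h2 : HasDerivAt (fun t : ℝ => 1 - t) (-1) t := by
      simpa using ((hasDerivAt_id t).const_sub 1)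
    have h3 := h1.div h2 hne
    have heq : (a * (1 - t) - a * t * -1) / ((1 - t) ^ 2) = a / (1 - t) ^ 2 := by
      field_simp; ring
    rw [heq] at h3
    exact h3.hasDerivWithinAt
  have hinj : InjOn f (Ioo (0:ℝ) 1) := by
    intro x hx y hy h
    have hx1 : (1:ℝ) - x ≠ 0 := by have h2 := hx.2; intro hh; linarith
    have hy1 : (1:ℝ) - y ≠ 0 := by have h2 := hy.2; intro hh; linarith
    simp only [hf] at h
    field_simp [hf] at h
    have : a * x = a * y := by nlinarith [h]
    exact mul_left_cancel₀ (ne_of_gt ha) this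
  rw [← himg, integral_image_eq_integral_abs_deriv_smul measurableSet_Ioo hderiv hinj]
  have hcongr : ∀ t ∈ Ioo (0:ℝ) 1,
      |a / (1 - t) ^ 2| • ((↑(f t) : ℂ) ^ (s - 1) / ((↑(f t) : ℂ) + (a : ℂ)))
        = (a : ℂ) ^ (s - 1) * ((t : ℂ) ^ (s - 1) * (1 - (t : ℂ)) ^ (1 - s - 1)) := by
    intro t ht
    obtain ⟨ht0, ht1⟩ := ht
    have hb : (0:ℝ) < 1 - t := by linarith
    have hbne : (1:ℝ) - t ≠ 0 := ne_of_gt hb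
    have habs : |a / (1 - t) ^ 2| = a / (1 - t) ^ 2 := abs_of_pos (by positivity)
    have hcC0 : (1 : ℂ) - (t : ℂ) ≠ 0 :=
      sub_ne_zero.mpr (by exact_mod_cast (ne_of_lt ht1).symm)
    have haC0 : (a : ℂ) ≠ 0 := Complex.ofReal_ne_zero.mpr (ne_of_gt ha)
    have htC0 : (t : ℂ) ≠ 0 := Complex.ofReal_ne_zero.mpr (ne_of_gt ht0)
    have hcs0 : ((1 : ℂ) - (t : ℂ)) ^ (s - 1) ≠ 0 := by
      rw [Ne, Complex.cpow_eq_zero_iff]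
      tauto
    have hcp : ((f t : ℝ) : ℂ) ^ (s - 1)
        = (a : ℂ) ^ (s - 1) * (t : ℂ) ^ (s - 1) * (((1 : ℂ) - (t : ℂ)) ^ (s - 1))⁻¹ := by
      have hfpos : 0 < f t := div_pos (mul_pos ha ht0) hb
      have h1 : f t * (1 - t) = a * t := by rw [hf]; field_simp
      have h2 := Complex.mul_cpow_ofReal_nonneg hfpos.le hb.le (s - 1)
      push_cast at h2
      rw [show ((f t : ℝ) : ℂ) * ((1 : ℂ) - (t : ℂ)) = (a : ℂ) * (t : ℂ) by
          have := congrArg (fun r : ℝ => (r : ℂ)) h1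
          push_cast at this
          linear_combination this,
        Complex.mul_cpow_ofReal_nonneg ha.le ht0.le (s - 1)] at h2
      field_simp [hcs0]
      linear_combination h2.symm
    have hden : ((f t : ℝ) : ℂ) + (a : ℂ) = (a : ℂ) / ((1 : ℂ) - (t : ℂ)) := by
      rw [hf]
      push_cast
      field_simp
      ring
    have hexp : ((1 : ℂ) - (t : ℂ)) ^ (1 - s - 1)
        = ((1 : ℂ) - (t : ℂ))⁻¹ * (((1 : ℂ) - (t : ℂ)) ^ (s - 1))⁻¹ := by
      rw [show (1 - s - 1 : ℂ) = -(s - 1) + (-1) by ring, Complex.cpow_add _ _ hcC0,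
        Complex.cpow_neg, Complex.cpow_neg_one]
      ring
    rw [habs, Complex.real_smul, hcp, hden, hexp,
      show ((a / (1 - t) ^ 2 : ℝ) : ℂ) = (a : ℂ) / ((1 : ℂ) - (t : ℂ)) ^ (2:ℕ) by
        push_cast; ring]
    field_simp
  rw [setIntegral_congr_fun measurableSet_Ioo hcongr]
  rw [integral_const_mul]
  have : ∫ t in Ioo (0:ℝ) 1, (t : ℂ) ^ (s - 1) * (1 - (t : ℂ)) ^ (1 - s - 1)
      = Complex.betaIntegral s (1 - s) := by
    rw [Complex.betaIntegral, intervalIntegral.integral_of_le zero_le_one,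
      ← Measure.restrict_congr_set Ioo_ae_eq_Ioc]
  rw [this, beta_refl h0 h1]
  ring


lemma prodC_eq (n : ℕ) (x : ℝ) :
    (∏ k ∈ Finset.Icc 1 (n + 1), ((x : ℂ) + (k : ℂ)))
      = (((∏ k ∈ Finset.Icc 1 (n + 1), (x + (k : ℝ))) : ℝ) : ℂ) := by
  push_cast
  rfl

lemma prodR_pos {n : ℕ} {x : ℝ} (hx : 0 < x) :
    0 < ∏ k ∈ Finset.Icc 1 (n + 1), (x + (k : ℝ)) :=
  Finset.prod_pos fun k _ => by positivity

lemma prodC_ne_zero {n : ℕ} {x : ℝ} (hx : 0 < x) :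
    (∏ k ∈ Finset.Icc 1 (n + 1), ((x : ℂ) + (k : ℂ))) ≠ 0 := by
  rw [prodC_eq]
  exact Complex.ofReal_ne_zero.mpr (ne_of_gt (prodR_pos hx))

lemma contOn_Hfun (n : ℕ) (s : ℂ) :
    ContinuousOn (fun x : ℝ =>
      (x : ℂ) ^ (s - 1) / ∏ k ∈ Finset.Icc 1 (n + 1), ((x : ℂ) + (k : ℂ))) (Ioi 0) := by
  apply ContinuousOn.div
  · intro x hx
    exact (Complex.continuousAt_ofReal_cpow_const x _ (Or.inr (ne_of_gt hx))).continuousWithinAt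
  · exact (continuous_finset_prod _ fun k _ =>
      (Complex.continuous_ofReal.add continuous_const)).continuousOn
  · exact fun x hx => prodC_ne_zero hx

lemma norm_Hfun (n : ℕ) (s : ℂ) {x : ℝ} (hx : 0 < x) :
    ‖(x : ℂ) ^ (s - 1) / ∏ k ∈ Finset.Icc 1 (n + 1), ((x : ℂ) + (k : ℂ))‖
      = x ^ (s.re - 1) / ∏ k ∈ Finset.Icc 1 (n + 1), (x + (k : ℝ)) := by
  rw [norm_div, prodC_eq,
    Complex.norm_cpow_eq_rpow_re_of_pos hx, Complex.norm_real, Real.norm_eq_abs,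
    abs_of_pos (prodR_pos hx)]
  simp [Complex.sub_re]

lemma integrableOn_Hfun (n : ℕ) (s : ℂ) (h0 : 0 < s.re) (h1 : s.re < n + 1) :
    IntegrableOn (fun x : ℝ =>
      (x : ℂ) ^ (s - 1) / ∏ k ∈ Finset.Icc 1 (n + 1), ((x : ℂ) + (k : ℂ))) (Ioi 0) := by
  set f := fun x : ℝ =>
      (x : ℂ) ^ (s - 1) / ∏ k ∈ Finset.Icc 1 (n + 1), ((x : ℂ) + (k : ℂ)) with hfdef
  have hmeas : ∀ t : Set ℝ, MeasurableSet t → t ⊆ Ioi 0 →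
      AEStronglyMeasurable f (volume.restrict t) :=
    fun t ht hsub => ((contOn_Hfun n s).mono hsub).aestronglyMeasurable ht
  have h01 : IntegrableOn f (Ioc 0 1) := by
    have hmaj : IntegrableOn (fun x : ℝ => x ^ (s.re - 1)) (Ioc 0 1) := by
      rw [← intervalIntegrable_iff_integrableOn_Ioc_of_le zero_le_one]
      exact intervalIntegral.intervalIntegrable_rpow' (by linarith)
    refine hmaj.integrable.mono' (hmeas _ measurableSet_Ioc Ioc_subset_Ioi_self) ?_
    rw [ae_restrict_iff' measurableSet_Ioc]
    refine ae_of_all _ fun x hx => ?_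
    rw [norm_Hfun n s hx.1]
    have hd : (1:ℝ) ≤ ∏ k ∈ Finset.Icc 1 (n + 1), (x + (k : ℝ)) := by
      have h := Finset.prod_le_prod (s := Finset.Icc 1 (n + 1)) (f := fun _ : ℕ => (1:ℝ))
        (g := fun k : ℕ => x + (k : ℝ)) (fun k _ => zero_le_one) (fun k hk => by
          show (1:ℝ) ≤ x + (k : ℝ)
          have h1k : (1:ℝ) ≤ (k : ℝ) := by exact_mod_cast (Finset.mem_Icc.mp hk).1
          linarith [hx.1])
      simpa using h
    calc x ^ (s.re - 1) / ∏ k ∈ Finset.Icc 1 (n + 1), (x + (k : ℝ))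
        ≤ x ^ (s.re - 1) / 1 := by
          exact div_le_div_of_nonneg_left (Real.rpow_nonneg hx.1.le _) one_pos hd
      _ = x ^ (s.re - 1) := by rw [div_one]
  have h1i : IntegrableOn f (Ioi 1) := by
    have hmaj : IntegrableOn (fun x : ℝ => x ^ (s.re - 1 - (n + 1))) (Ioi 1) :=
      integrableOn_Ioi_rpow_of_lt (by push_cast; linarith) one_pos
    refine hmaj.integrable.mono' (hmeas _ measurableSet_Ioi
      (fun x hx => Set.mem_Ioi.mpr (lt_trans one_pos hx))) ?_
    rw [ae_restrict_iff' measurableSet_Ioi]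
    refine ae_of_all _ fun x hx => ?_
    have hx0 : (0:ℝ) < x := lt_trans one_pos hx
    rw [norm_Hfun n s hx0]
    have hd : x ^ (n + 1 : ℕ) ≤ ∏ k ∈ Finset.Icc 1 (n + 1), (x + (k : ℝ)) := by
      have heq : x ^ (n + 1 : ℕ) = ∏ k ∈ Finset.Icc 1 (n + 1), x := by
        rw [Finset.prod_const, Nat.card_Icc]
        norm_num
      rw [heq]
      refine Finset.prod_le_prod (fun k _ => le_of_lt hx0) fun k hk => ?_
      have : (0:ℝ) ≤ (k : ℝ) := Nat.cast_nonneg k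
      linarith
    have hrw : x ^ (s.re - 1 - (n + 1)) = x ^ (s.re - 1) / x ^ (n + 1 : ℕ) := by
      rw [← Real.rpow_natCast x (n + 1), ← Real.rpow_sub hx0]
      push_cast
      ring_nf
    rw [hrw]
    exact div_le_div_of_nonneg_left (Real.rpow_nonneg hx0.le _) (by positivity) hd
  have hun : Set.Ioc (0:ℝ) 1 ∪ Set.Ioi 1 = Set.Ioi 0 := Set.Ioc_union_Ioi_eq_Ioi zero_le_one
  rw [← hun]
  exact h01.union h1i

lemma integrableOn_term {a : ℝ} (ha : 1 ≤ a) (s : ℂ) (h0 : 0 < s.re) (h1 : s.re < 1) :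
    IntegrableOn (fun x : ℝ => (x : ℂ) ^ (s - 1) / ((x : ℂ) + (a : ℂ))) (Ioi 0) := by
  have ha0 : (0:ℝ) < a := lt_of_lt_of_le one_pos ha
  set f := fun x : ℝ => (x : ℂ) ^ (s - 1) / ((x : ℂ) + (a : ℂ)) with hfdef
  have hnorm : ∀ x : ℝ, 0 < x → ‖f x‖ = x ^ (s.re - 1) / (x + a) := by
    intro x hx
    rw [hfdef]
    simp only
    rw [norm_div, show ((x:ℂ) + (a:ℂ)) = (((x + a : ℝ)) : ℂ) by push_cast; ring,
      Complex.norm_cpow_eq_rpow_re_of_pos hx,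
      Complex.norm_real, Real.norm_eq_abs, abs_of_pos (by linarith)]
    simp [Complex.sub_re]
  have hcont : ContinuousOn f (Ioi 0) := by
    apply ContinuousOn.div
    · intro x hx
      exact (Complex.continuousAt_ofReal_cpow_const x _ (Or.inr (ne_of_gt hx))).continuousWithinAt
    · exact (Complex.continuous_ofReal.add continuous_const).continuousOn
    · intro x hx
      rw [show ((x:ℂ) + (a:ℂ)) = (((x + a : ℝ)) : ℂ) by push_cast; ring]
      exact Complex.ofReal_ne_zero.mpr (by intro h; simp at hx; linarith)
  have hmeas : ∀ t : Set ℝ, MeasurableSet t → t ⊆ Ioi 0 →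
      AEStronglyMeasurable f (volume.restrict t) :=
    fun t ht hsub => (hcont.mono hsub).aestronglyMeasurable ht
  have h01 : IntegrableOn f (Ioc 0 1) := by
    have hmaj : IntegrableOn (fun x : ℝ => x ^ (s.re - 1)) (Ioc 0 1) := by
      rw [← intervalIntegrable_iff_integrableOn_Ioc_of_le zero_le_one]
      exact intervalIntegral.intervalIntegrable_rpow' (by linarith)
    refine hmaj.integrable.mono' (hmeas _ measurableSet_Ioc Ioc_subset_Ioi_self) ?_
    rw [ae_restrict_iff' measurableSet_Ioc]
    refine ae_of_all _ fun x hx => ?_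
    rw [hnorm x hx.1]
    calc x ^ (s.re - 1) / (x + a) ≤ x ^ (s.re - 1) / 1 := by
          exact div_le_div_of_nonneg_left (Real.rpow_nonneg hx.1.le _) one_pos
            (by linarith [hx.1])
      _ = x ^ (s.re - 1) := by rw [div_one]
  have h1i : IntegrableOn f (Ioi 1) := by
    have hmaj : IntegrableOn (fun x : ℝ => x ^ (s.re - 1 - 1)) (Ioi 1) :=
      integrableOn_Ioi_rpow_of_lt (by linarith) one_pos
    refine hmaj.integrable.mono' (hmeas _ measurableSet_Ioi
      (fun x hx => Set.mem_Ioi.mpr (lt_trans one_pos hx))) ?_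
    rw [ae_restrict_iff' measurableSet_Ioi]
    refine ae_of_all _ fun x hx => ?_
    have hx0 : (0:ℝ) < x := lt_trans one_pos hx
    rw [hnorm x hx0]
    have hrw : x ^ (s.re - 1 - 1) = x ^ (s.re - 1) / x := by
      rw [Real.rpow_sub hx0, Real.rpow_one]
    rw [hrw]
    exact div_le_div_of_nonneg_left (Real.rpow_nonneg hx0.le _) hx0 (by linarith [ha0])
  have hun : Set.Ioc (0:ℝ) 1 ∪ Set.Ioi 1 = Set.Ioi 0 := Set.Ioc_union_Ioi_eq_Ioi zero_le_one
  rw [← hun]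
  exact h01.union h1i

open Finset

lemma prod_Icc_to_range (n : ℕ) (x : ℂ) :
    ∏ k ∈ Finset.Icc 1 (n + 1), (x + (k : ℂ))
      = ∏ j ∈ Finset.range (n + 1), (x + (j : ℂ) + 1) := by
  rw [← Finset.Ico_add_one_right_eq_Icc, Finset.prod_Ico_eq_prod_range]
  refine Finset.prod_congr (by norm_num) fun j _ => by push_cast; ring

lemma sum_pf (n : ℕ) : ∀ x : ℂ, (∀ k : ℕ, x + (k : ℂ) ≠ 0) →
    ∑ k ∈ Finset.range (n + 1), (-1 : ℂ) ^ k * (n.choose k : ℂ) * (x + (k : ℂ) + 1)⁻¹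
      = (n.factorial : ℂ) * (∏ j ∈ Finset.range (n + 1), (x + (j : ℂ) + 1))⁻¹ := by
  induction n with
  | zero =>
    intro x hx
    simp
  | succ n IH =>
    intro x hx
    have hx1 : ∀ k : ℕ, (x + 1) + (k : ℂ) ≠ 0 := fun k => by
      rw [show (x + 1) + (k : ℂ) = x + ((k + 1 : ℕ) : ℂ) by push_cast; ring]
      exact hx (k + 1)
    have hfac : ∀ j : ℕ, x + (j : ℂ) + 1 ≠ 0 := fun j => by
      rw [show x + (j : ℂ) + 1 = x + ((j + 1 : ℕ) : ℂ) by push_cast; ring]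
      exact hx (j + 1)
    have IHx := IH x hx
    have IHx1 := IH (x + 1) hx1
    set g : ℕ → ℂ := fun j => (-1 : ℂ) ^ j * (n.choose j : ℂ) * (x + (j : ℂ) + 1)⁻¹ with hg
    set T : ℂ := ∑ k ∈ Finset.range (n + 1), g k with hT
    set T1 : ℂ := ∑ k ∈ Finset.range (n + 1),
      (-1 : ℂ) ^ k * (n.choose k : ℂ) * ((x + 1) + (k : ℂ) + 1)⁻¹ with hT1
    have hstep : ∑ k ∈ Finset.range (n + 1 + 1),
        (-1 : ℂ) ^ k * ((n + 1).choose k : ℂ) * (x + (k : ℂ) + 1)⁻¹ = T - T1 := by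
      rw [Finset.sum_range_succ']
      have hterm : ∀ i ∈ Finset.range (n + 1),
          (-1 : ℂ) ^ (i + 1) * ((n + 1).choose (i + 1) : ℂ) * (x + ((i + 1 : ℕ) : ℂ) + 1)⁻¹
            = -((-1 : ℂ) ^ i * (n.choose i : ℂ) * ((x + 1) + (i : ℂ) + 1)⁻¹) + g (i + 1) := by
        intro i _
        rw [hg]
        simp only [Nat.choose_succ_succ, Nat.succ_eq_add_one]
        push_cast
        ring
      rw [Finset.sum_congr rfl hterm, Finset.sum_add_distrib, Finset.sum_neg_distrib, ← hT1]
      have hgtop : ∑ i ∈ Finset.range (n + 1 + 1), g i = T := by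
        rw [Finset.sum_range_succ, ← hT, hg]
        simp [Nat.choose_succ_self]
      have hsum1 : ∑ i ∈ Finset.range (n + 1), g (i + 1) = T - g 0 := by
        have h := Finset.sum_range_succ' g (n + 1)
        rw [hgtop] at h
        linear_combination -h
      rw [hsum1]
      have hg0 : g 0 = (x + 1)⁻¹ := by rw [hg]; simp
      rw [hg0]
      simp only [pow_zero, Nat.choose_zero_right, Nat.cast_one, Nat.cast_zero, one_mul,
        add_zero]
      ring
    rw [hstep, IHx, IHx1]
    set A : ℂ := ∏ j ∈ Finset.range (n + 1), (x + (j : ℂ) + 1) with hA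
    set B : ℂ := ∏ j ∈ Finset.range (n + 1), ((x + 1) + (j : ℂ) + 1) with hB
    set F : ℂ := ∏ j ∈ Finset.range (n + 1 + 1), (x + (j : ℂ) + 1) with hF
    have hAF : F = A * (x + ((n + 1 : ℕ) : ℂ) + 1) := by
      rw [hF, hA, Finset.prod_range_succ]
    have hBF : F = (x + 1) * B := by
      rw [hF, hB, Finset.prod_range_succ' (fun j => x + (j : ℂ) + 1) (n + 1)]
      rw [show ∏ j ∈ Finset.range (n + 1), (x + ((j + 1 : ℕ) : ℂ) + 1)
          = ∏ j ∈ Finset.range (n + 1), ((x + 1) + (j : ℂ) + 1) from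
        Finset.prod_congr rfl fun j _ => by push_cast; ring]
      push_cast
      ring
    have hA0 : A ≠ 0 := Finset.prod_ne_zero_iff.mpr fun j _ => hfac j
    have hB0 : B ≠ 0 := Finset.prod_ne_zero_iff.mpr fun j _ => by
      rw [show (x + 1) + (j : ℂ) + 1 = x + ((j + 1 : ℕ) : ℂ) + 1 by push_cast; ring]
      exact hfac (j + 1)
    have hF0 : F ≠ 0 := Finset.prod_ne_zero_iff.mpr fun j _ => hfac j
    have hfacc : ((n + 1).factorial : ℂ) = ((n : ℂ) + 1) * (n.factorial : ℂ) := by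
      rw [Nat.factorial_succ]
      push_cast
      ring
    rw [hfacc]
    field_simp
    push_cast at hAF
    linear_combination (n.factorial : ℂ) * B * hAF - (n.factorial : ℂ) * A * hBF

lemma sin_pi_mul_ne (s : ℂ) (m : ℤ) (h0 : (m : ℝ) < s.re) (h1 : s.re < m + 1) :
    Complex.sin ((Real.pi : ℂ) * s) ≠ 0 := by
  rw [Complex.sin_ne_zero_iff]
  intro k h
  have hπ : (Real.pi : ℂ) ≠ 0 := Complex.ofReal_ne_zero.mpr Real.pi_ne_zero
  have hs : s = (k : ℂ) := by
    have h' : (Real.pi : ℂ) * s = (Real.pi : ℂ) * (k : ℂ) := by rw [h]; ring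
    exact mul_left_cancel₀ hπ h'
  have hre : s.re = (k : ℝ) := by rw [hs]; simp
  rw [hre] at h0 h1
  have hk0 : m < k := by exact_mod_cast h0
  have hk1 : k < m + 1 := by exact_mod_cast h1
  omega

lemma formula_base (n : ℕ) (s : ℂ) (h0 : 0 < s.re) (h1 : s.re < 1) :
    ∫ x in Ioi (0 : ℝ),
        (x : ℂ) ^ (s - 1) / ∏ k ∈ Finset.Icc 1 (n + 1), ((x : ℂ) + (k : ℂ))
      = (Real.pi : ℂ) / (Complex.sin ((Real.pi : ℂ) * s) * (Nat.factorial n : ℂ)) *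
        ∑ k ∈ Finset.range (n + 1), (-1 : ℂ) ^ k * (Nat.choose n k : ℂ) *
          ((k : ℂ) + 1) ^ (s - 1) := by
  have hsin : Complex.sin ((Real.pi : ℂ) * s) ≠ 0 := by
    refine sin_pi_mul_ne s 0 ?_ ?_ <;> push_cast <;> linarith
  have hfne : (Nat.factorial n : ℂ) ≠ 0 := by
    exact_mod_cast Nat.cast_ne_zero.mpr (Nat.factorial_ne_zero n)
  have hpt : ∀ x ∈ Ioi (0:ℝ),
      (x : ℂ) ^ (s - 1) / ∏ k ∈ Finset.Icc 1 (n + 1), ((x : ℂ) + (k : ℂ))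
        = ∑ k ∈ Finset.range (n + 1), ((-1 : ℂ) ^ k * (Nat.choose n k : ℂ) *
            (Nat.factorial n : ℂ)⁻¹) *
            ((x : ℂ) ^ (s - 1) / ((x : ℂ) + (((k + 1 : ℕ) : ℝ) : ℂ))) := by
    intro x hx
    have hx0 : (0:ℝ) < x := hx
    have hxne : ∀ k : ℕ, (x : ℂ) + (k : ℂ) ≠ 0 := fun k => by
      rw [show (x:ℂ) + (k:ℂ) = ((x + k : ℝ) : ℂ) by push_cast; ring]
      exact Complex.ofReal_ne_zero.mpr (by positivity)
    have hpf := sum_pf n (x : ℂ) hxne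
    have hP : (∏ j ∈ Finset.range (n + 1), ((x:ℂ) + (j:ℂ) + 1))⁻¹
        = (Nat.factorial n : ℂ)⁻¹ * ∑ k ∈ Finset.range (n + 1),
            (-1 : ℂ) ^ k * (Nat.choose n k : ℂ) * ((x:ℂ) + (k:ℂ) + 1)⁻¹ := by
      rw [hpf, ← mul_assoc, inv_mul_cancel₀ hfne, one_mul]
    rw [prod_Icc_to_range, div_eq_mul_inv, hP, ← mul_assoc, Finset.mul_sum]
    refine Finset.sum_congr rfl fun k _ => ?_
    rw [div_eq_mul_inv]
    push_cast
    ring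
  rw [setIntegral_congr_fun measurableSet_Ioi hpt]
  rw [integral_finset_sum _ (fun k _ => by
    refine Integrable.const_mul ?_ _
    refine integrableOn_term ?_ s h0 h1
    push_cast
    linarith [Nat.cast_nonneg (α := ℝ) k])]
  have heval : ∀ k ∈ Finset.range (n + 1),
      ∫ x in Ioi (0:ℝ), ((-1 : ℂ) ^ k * (Nat.choose n k : ℂ) * (Nat.factorial n : ℂ)⁻¹) *
          ((x : ℂ) ^ (s - 1) / ((x : ℂ) + (((k + 1 : ℕ) : ℝ) : ℂ)))
        = ((-1 : ℂ) ^ k * (Nat.choose n k : ℂ) * (Nat.factorial n : ℂ)⁻¹) *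
          ((Real.pi : ℂ) / Complex.sin ((Real.pi : ℂ) * s) * (((k + 1 : ℕ) : ℝ) : ℂ) ^ (s - 1)) := by
    intro k _
    rw [integral_const_mul, integral_cpow_div_add ((k + 1 : ℕ) : ℝ)
      (by positivity) h0 h1]
  rw [Finset.sum_congr rfl heval, Finset.mul_sum]
  refine Finset.sum_congr rfl fun k _ => ?_
  rw [show ((((k + 1 : ℕ) : ℝ)) : ℂ) = (k : ℂ) + 1 by push_cast; ring]
  field_simp

lemma formula_step (n : ℕ) (s : ℂ) (hs1 : 1 < s.re) (hs2 : s.re < (n : ℝ) + 2)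
    (hsin : Complex.sin ((Real.pi : ℂ) * s) ≠ 0)
    (ih1 : ∫ x in Ioi (0 : ℝ),
        (x : ℂ) ^ ((s - 1) - 1) / ∏ k ∈ Finset.Icc 1 (n + 1), ((x : ℂ) + (k : ℂ))
      = (Real.pi : ℂ) / (Complex.sin ((Real.pi : ℂ) * (s - 1)) * (Nat.factorial n : ℂ)) *
        ∑ k ∈ Finset.range (n + 1), (-1 : ℂ) ^ k * (Nat.choose n k : ℂ) *
          ((k : ℂ) + 1) ^ ((s - 1) - 1))
    (ih2 : ∫ x in Ioi (0 : ℝ),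
        (x : ℂ) ^ ((s - 1) - 1) / ∏ k ∈ Finset.Icc 1 (n + 2), ((x : ℂ) + (k : ℂ))
      = (Real.pi : ℂ) / (Complex.sin ((Real.pi : ℂ) * (s - 1)) * (Nat.factorial (n + 1) : ℂ)) *
        ∑ k ∈ Finset.range (n + 2), (-1 : ℂ) ^ k * (Nat.choose (n + 1) k : ℂ) *
          ((k : ℂ) + 1) ^ ((s - 1) - 1)) :
    ∫ x in Ioi (0 : ℝ),
        (x : ℂ) ^ (s - 1) / ∏ k ∈ Finset.Icc 1 (n + 2), ((x : ℂ) + (k : ℂ))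
      = (Real.pi : ℂ) / (Complex.sin ((Real.pi : ℂ) * s) * (Nat.factorial (n + 1) : ℂ)) *
        ∑ k ∈ Finset.range (n + 2), (-1 : ℂ) ^ k * (Nat.choose (n + 1) k : ℂ) *
          ((k : ℂ) + 1) ^ (s - 1) := by
  have hre0 : 0 < (s - 1).re := by
    simp only [Complex.sub_re, Complex.one_re]; linarith
  have hre1 : (s - 1).re < (n : ℝ) + 1 := by
    simp only [Complex.sub_re, Complex.one_re]; linarith
  have int1 : IntegrableOn (fun x : ℝ =>
      (x : ℂ) ^ ((s - 1) - 1) / ∏ k ∈ Finset.Icc 1 (n + 1), ((x : ℂ) + (k : ℂ))) (Ioi 0) :=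
    integrableOn_Hfun n (s - 1) hre0 hre1
  have int2 : IntegrableOn (fun x : ℝ =>
      (x : ℂ) ^ ((s - 1) - 1) / ∏ k ∈ Finset.Icc 1 (n + 1 + 1), ((x : ℂ) + (k : ℂ))) (Ioi 0) :=
    integrableOn_Hfun (n + 1) (s - 1) hre0 (by push_cast; linarith)
  have hpt : ∀ x ∈ Ioi (0:ℝ),
      (x : ℂ) ^ (s - 1) / ∏ k ∈ Finset.Icc 1 (n + 2), ((x : ℂ) + (k : ℂ))
        = ((x : ℂ) ^ ((s - 1) - 1) / ∏ k ∈ Finset.Icc 1 (n + 1), ((x : ℂ) + (k : ℂ)))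
          - ((n : ℂ) + 2) *
            ((x : ℂ) ^ ((s - 1) - 1) / ∏ k ∈ Finset.Icc 1 (n + 2), ((x : ℂ) + (k : ℂ))) := by
    intro x hx
    have hx0 : (0:ℝ) < x := hx
    have hxC : (x : ℂ) ≠ 0 := Complex.ofReal_ne_zero.mpr (ne_of_gt hx0)
    have hsplit : ∏ k ∈ Finset.Icc 1 (n + 2), ((x : ℂ) + (k : ℂ))
        = (∏ k ∈ Finset.Icc 1 (n + 1), ((x : ℂ) + (k : ℂ))) * ((x : ℂ) + ((n + 2 : ℕ) : ℂ)) :=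
      Finset.prod_Icc_succ_top (by omega) _
    have hPn : (∏ k ∈ Finset.Icc 1 (n + 1), ((x : ℂ) + (k : ℂ))) ≠ 0 := prodC_ne_zero hx0
    have hlast : (x : ℂ) + ((n + 2 : ℕ) : ℂ) ≠ 0 := by
      rw [show (x:ℂ) + ((n + 2 : ℕ) : ℂ) = ((x + (n + 2 : ℕ) : ℝ) : ℂ) by push_cast; ring]
      exact Complex.ofReal_ne_zero.mpr (by positivity)
    have hcp : (x : ℂ) ^ (s - 1) = (x : ℂ) ^ ((s - 1) - 1) * (x : ℂ) := by
      have h := Complex.cpow_add (x := (x : ℂ)) ((s - 1) - 1) 1 hxC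
      rw [show (s - 1) - 1 + 1 = s - 1 by ring, Complex.cpow_one] at h
      exact h
    rw [hsplit, hcp]
    have hcast : ((n + 2 : ℕ) : ℂ) = (n : ℂ) + 2 := by push_cast; ring
    rw [hcast] at hlast ⊢
    field_simp
    ring
  rw [setIntegral_congr_fun measurableSet_Ioi hpt,
    integral_sub int1 (int2.const_mul _), integral_const_mul, ih1, ih2]
  -- now pure algebra
  have hsin' : Complex.sin ((Real.pi : ℂ) * (s - 1)) = -Complex.sin ((Real.pi : ℂ) * s) := by
    rw [mul_sub, mul_one, Complex.sin_sub_pi]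
  have hfne : (Nat.factorial n : ℂ) ≠ 0 :=
    Nat.cast_ne_zero.mpr (Nat.factorial_ne_zero n)
  have hfacc : (Nat.factorial (n + 1) : ℂ) = ((n : ℂ) + 1) * (Nat.factorial n : ℂ) := by
    rw [Nat.factorial_succ]; push_cast; ring
  have hterm : ∀ k ∈ Finset.range (n + 2),
      (-1 : ℂ) ^ k * (Nat.choose (n + 1) k : ℂ) * ((k : ℂ) + 1) ^ (s - 1)
        = ((n : ℂ) + 2) * ((-1 : ℂ) ^ k * (Nat.choose (n + 1) k : ℂ) * ((k : ℂ) + 1) ^ ((s - 1) - 1))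
          - ((n : ℂ) + 1) * ((-1 : ℂ) ^ k * (Nat.choose n k : ℂ) * ((k : ℂ) + 1) ^ ((s - 1) - 1)) := by
    intro k hk
    have hk1 : (k : ℂ) + 1 ≠ 0 := by
      rw [show (k:ℂ) + 1 = ((k + 1 : ℕ) : ℂ) by push_cast; ring]
      exact Nat.cast_ne_zero.mpr (Nat.succ_ne_zero k)
    have hcp : ((k : ℂ) + 1) ^ (s - 1) = ((k : ℂ) + 1) ^ ((s - 1) - 1) * ((k : ℂ) + 1) := by
      have h := Complex.cpow_add (x := (k : ℂ) + 1) ((s - 1) - 1) 1 hk1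
      rw [show (s - 1) - 1 + 1 = s - 1 by ring, Complex.cpow_one] at h
      exact h
    have hkle : k ≤ n + 1 := by
      have := Finset.mem_range.mp hk; omega
    have hnat := Nat.choose_mul_succ_eq n k
    have hcast : (Nat.choose n k : ℂ) * ((n : ℂ) + 1)
        = (Nat.choose (n + 1) k : ℂ) * (((n : ℂ) + 1) - (k : ℂ)) := by
      rcases le_or_gt k (n + 1) with hle | hlt
      · have h2 : ((Nat.choose n k * (n + 1) : ℕ) : ℂ)
            = ((Nat.choose (n + 1) k * (n + 1 - k) : ℕ) : ℂ) := by exact_mod_cast hnat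
        push_cast [Nat.cast_sub hle] at h2
        linear_combination h2
      · rw [Nat.choose_eq_zero_of_lt (by omega), Nat.choose_eq_zero_of_lt (by omega)]
        simp
    rw [hcp]
    linear_combination ((-1 : ℂ) ^ k * ((k : ℂ) + 1) ^ ((s - 1) - 1)) * hcast
  have hSigma : ∑ k ∈ Finset.range (n + 2), (-1 : ℂ) ^ k * (Nat.choose (n + 1) k : ℂ) *
        ((k : ℂ) + 1) ^ (s - 1)
      = ((n : ℂ) + 2) * ∑ k ∈ Finset.range (n + 2), (-1 : ℂ) ^ k *
            (Nat.choose (n + 1) k : ℂ) * ((k : ℂ) + 1) ^ ((s - 1) - 1)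
        - ((n : ℂ) + 1) * ∑ k ∈ Finset.range (n + 1), (-1 : ℂ) ^ k *
            (Nat.choose n k : ℂ) * ((k : ℂ) + 1) ^ ((s - 1) - 1) := by
    rw [Finset.sum_congr rfl hterm, Finset.sum_sub_distrib, ← Finset.mul_sum, ← Finset.mul_sum]
    congr 2
    rw [Finset.sum_range_succ]
    simp [Nat.choose_succ_self]
  rw [hsin', hfacc, hSigma]
  have hn1 : (n : ℂ) + 1 ≠ 0 := by
    rw [show (n:ℂ) + 1 = ((n + 1 : ℕ) : ℂ) by push_cast; ring]
    exact Nat.cast_ne_zero.mpr (Nat.succ_ne_zero n)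
  set S := Complex.sin ((Real.pi : ℂ) * s) with hS
  set F := (Nat.factorial n : ℂ) with hF
  set A := ∑ k ∈ Finset.range (n + 1), (-1 : ℂ) ^ k * (Nat.choose n k : ℂ) *
    ((k : ℂ) + 1) ^ ((s - 1) - 1) with hA
  set B := ∑ k ∈ Finset.range (n + 2), (-1 : ℂ) ^ k * (Nat.choose (n + 1) k : ℂ) *
    ((k : ℂ) + 1) ^ ((s - 1) - 1) with hB
  field_simp
  ring

lemma formula_lt2' (n : ℕ) (s : ℂ) (h0 : 0 < s.re) (hn : s.re < (n : ℝ) + 1)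
    (h2 : s.re < 2) (hne : s.re ≠ 1) :
    ∫ x in Ioi (0 : ℝ),
        (x : ℂ) ^ (s - 1) / ∏ k ∈ Finset.Icc 1 (n + 1), ((x : ℂ) + (k : ℂ))
      = (Real.pi : ℂ) / (Complex.sin ((Real.pi : ℂ) * s) * (Nat.factorial n : ℂ)) *
        ∑ k ∈ Finset.range (n + 1), (-1 : ℂ) ^ k * (Nat.choose n k : ℂ) *
          ((k : ℂ) + 1) ^ (s - 1) := by
  rcases lt_or_gt_of_ne hne with hlt | hgt
  · exact formula_base n s h0 hlt
  · cases n with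
    | zero =>
      exfalso
      push_cast at hn
      linarith
    | succ k =>
      have hsk : s.re < (k : ℝ) + 2 := by push_cast at hn; linarith
      have hsin : Complex.sin ((Real.pi : ℂ) * s) ≠ 0 :=
        sin_pi_mul_ne s 1 (by push_cast; linarith) (by push_cast; linarith)
      have hr0 : 0 < (s - 1).re := by simp [Complex.sub_re]; linarith
      have hr1 : (s - 1).re < 1 := by simp [Complex.sub_re]; linarith
      exact formula_step k s hgt hsk hsin
        (formula_base k (s - 1) hr0 hr1) (formula_base (k + 1) (s - 1) hr0 hr1)

lemma bound_integrable (n : ℕ) (hn1 : 1 ≤ n) :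
    IntegrableOn (fun x : ℝ =>
      (1 + x ^ (1/2 : ℝ)) / ∏ k ∈ Finset.Icc 1 (n + 1), (x + (k : ℝ))) (Ioi 0) := by
  set g := fun x : ℝ => (1 + x ^ (1/2 : ℝ)) / ∏ k ∈ Finset.Icc 1 (n + 1), (x + (k : ℝ))
    with hg
  have hcont : ContinuousOn g (Ioi 0) := by
    refine ContinuousOn.div ?_ ?_ (fun x hx => ne_of_gt (prodR_pos hx))
    · refine continuousOn_const.add fun x hx => ?_
      exact (Real.continuousAt_rpow_const x _ (Or.inl (ne_of_gt hx))).continuousWithinAt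
    · exact (continuous_finset_prod _ fun k _ =>
        (continuous_id.add continuous_const)).continuousOn
  have hmeas : ∀ t : Set ℝ, MeasurableSet t → t ⊆ Ioi 0 →
      AEStronglyMeasurable g (volume.restrict t) :=
    fun t ht hsub => (hcont.mono hsub).aestronglyMeasurable ht
  have hprod_ge_one : ∀ x : ℝ, 0 < x → (1:ℝ) ≤ ∏ k ∈ Finset.Icc 1 (n + 1), (x + (k : ℝ)) := by
    intro x hx
    have h := Finset.prod_le_prod (s := Finset.Icc 1 (n + 1)) (f := fun _ : ℕ => (1:ℝ))
      (g := fun k : ℕ => x + (k : ℝ)) (fun k _ => zero_le_one) (fun k hk => by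
        show (1:ℝ) ≤ x + (k : ℝ)
        have h1k : (1:ℝ) ≤ (k : ℝ) := by exact_mod_cast (Finset.mem_Icc.mp hk).1
        linarith)
    simpa using h
  have h01 : IntegrableOn g (Ioc 0 1) := by
    have hmaj : IntegrableOn (fun _ : ℝ => (2:ℝ)) (Ioc 0 1) :=
      integrableOn_const measure_Ioc_lt_top.ne
    refine hmaj.integrable.mono' (hmeas _ measurableSet_Ioc Ioc_subset_Ioi_self) ?_
    rw [ae_restrict_iff' measurableSet_Ioc]
    refine ae_of_all _ fun x hx => ?_
    have hx0 := hx.1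
    have hnum : (0:ℝ) ≤ 1 + x ^ (1/2 : ℝ) := by positivity
    have hg0 : 0 ≤ g x := div_nonneg hnum (le_of_lt (prodR_pos hx0))
    rw [Real.norm_eq_abs, _root_.abs_of_nonneg hg0, hg]
    have hx12 : x ^ (1/2 : ℝ) ≤ 1 := Real.rpow_le_one hx0.le hx.2 (by norm_num)
    calc (1 + x ^ (1/2 : ℝ)) / ∏ k ∈ Finset.Icc 1 (n + 1), (x + (k : ℝ))
        ≤ (1 + x ^ (1/2 : ℝ)) / 1 :=
          div_le_div_of_nonneg_left hnum one_pos (hprod_ge_one x hx0)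
      _ = 1 + x ^ (1/2 : ℝ) := div_one _
      _ ≤ 2 := by linarith
  have h1i : IntegrableOn g (Ioi 1) := by
    have hexp : (1/2 : ℝ) - (n + 1) < -1 := by
      have : (1:ℝ) ≤ (n:ℝ) := by exact_mod_cast hn1
      linarith
    have hmaj : IntegrableOn (fun x : ℝ => 2 * x ^ ((1/2 : ℝ) - (n + 1))) (Ioi 1) :=
      (integrableOn_Ioi_rpow_of_lt hexp one_pos).const_mul 2
    refine hmaj.integrable.mono' (hmeas _ measurableSet_Ioi
      (fun x hx => Set.mem_Ioi.mpr (lt_trans one_pos hx))) ?_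
    rw [ae_restrict_iff' measurableSet_Ioi]
    refine ae_of_all _ fun x hx => ?_
    have hx1 : (1:ℝ) < x := hx
    have hx0 : (0:ℝ) < x := lt_trans one_pos hx1
    have hnum : (0:ℝ) ≤ 1 + x ^ (1/2 : ℝ) := by positivity
    have hg0 : 0 ≤ g x := div_nonneg hnum (le_of_lt (prodR_pos hx0))
    rw [Real.norm_eq_abs, _root_.abs_of_nonneg hg0, hg]
    have h1le : (1:ℝ) ≤ x ^ (1/2 : ℝ) := Real.one_le_rpow hx1.le (by norm_num)
    have hd : x ^ ((n + 1 : ℕ) : ℝ) ≤ ∏ k ∈ Finset.Icc 1 (n + 1), (x + (k : ℝ)) := by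
      rw [Real.rpow_natCast]
      have heq : x ^ (n + 1 : ℕ) = ∏ k ∈ Finset.Icc 1 (n + 1), x := by
        rw [Finset.prod_const, Nat.card_Icc]
        norm_num
      rw [heq]
      refine Finset.prod_le_prod (fun k _ => le_of_lt hx0) fun k hk => ?_
      have : (0:ℝ) ≤ (k : ℝ) := Nat.cast_nonneg k
      linarith
    calc (1 + x ^ (1/2 : ℝ)) / ∏ k ∈ Finset.Icc 1 (n + 1), (x + (k : ℝ))
        ≤ 2 * x ^ (1/2 : ℝ) / x ^ ((n + 1 : ℕ) : ℝ) := by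
          refine div_le_div₀ (by positivity) (by linarith) (by positivity) hd
      _ = 2 * x ^ ((1/2 : ℝ) - (n + 1)) := by
          rw [mul_div_assoc, ← Real.rpow_sub hx0]
          push_cast
          ring_nf
  have hun : Set.Ioc (0:ℝ) 1 ∪ Set.Ioi 1 = Set.Ioi 0 := Set.Ioc_union_Ioi_eq_Ioi zero_le_one
  rw [← hun]
  exact h01.union h1i

lemma formula_boundary (n : ℕ) (s : ℂ) (hre : s.re = 1) (hn : (1 : ℝ) < (n : ℝ) + 1)
    (hsin : Complex.sin ((Real.pi : ℂ) * s) ≠ 0) :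
    ∫ x in Ioi (0 : ℝ),
        (x : ℂ) ^ (s - 1) / ∏ k ∈ Finset.Icc 1 (n + 1), ((x : ℂ) + (k : ℂ))
      = (Real.pi : ℂ) / (Complex.sin ((Real.pi : ℂ) * s) * (Nat.factorial n : ℂ)) *
        ∑ k ∈ Finset.range (n + 1), (-1 : ℂ) ^ k * (Nat.choose n k : ℂ) *
          ((k : ℂ) + 1) ^ (s - 1) := by
  have hn1 : 1 ≤ n := by
    by_contra h
    push_neg at h
    interval_cases n
    norm_num at hn
  have hfne : (Nat.factorial n : ℂ) ≠ 0 := Nat.cast_ne_zero.mpr (Nat.factorial_ne_zero n)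
  set c : ℕ → ℝ := fun j => 1 / ((j : ℝ) + 2) with hc
  have hc0 : ∀ j, 0 < c j := fun j => by positivity
  have hchalf : ∀ j, c j ≤ 1 / 2 := fun j => by
    rw [hc]
    simp only
    rw [div_le_div_iff₀ (by positivity) (by norm_num)]
    have : (0:ℝ) ≤ (j:ℝ) := Nat.cast_nonneg j
    linarith
  have hre' : ∀ j, (s + (c j : ℂ)).re = 1 + c j := fun j => by
    simp [Complex.add_re, hre]
  have hform : ∀ j : ℕ,
      ∫ x in Ioi (0 : ℝ),
          (x : ℂ) ^ ((s + (c j : ℂ)) - 1) / ∏ k ∈ Finset.Icc 1 (n + 1), ((x : ℂ) + (k : ℂ))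
        = (Real.pi : ℂ) / (Complex.sin ((Real.pi : ℂ) * (s + (c j : ℂ))) * (Nat.factorial n : ℂ)) *
          ∑ k ∈ Finset.range (n + 1), (-1 : ℂ) ^ k * (Nat.choose n k : ℂ) *
            ((k : ℂ) + 1) ^ ((s + (c j : ℂ)) - 1) := fun j => by
    refine formula_lt2' n (s + (c j : ℂ)) ?_ ?_ ?_ ?_
    · rw [hre' j]; linarith [hc0 j]
    · rw [hre' j]
      have : (1:ℝ) ≤ (n:ℝ) := by exact_mod_cast hn1
      linarith [hchalf j]
    · rw [hre' j]; linarith [hchalf j]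
    · rw [hre' j]; intro h; linarith [hc0 j]
  have hctend : Filter.Tendsto c Filter.atTop (nhds 0) := by
    have h := (tendsto_one_div_add_atTop_nhds_zero_nat (𝕜 := ℝ)).comp (Filter.tendsto_add_atTop_nat 1)
    refine h.congr fun j => ?_
    simp only [Function.comp_apply, hc]
    push_cast
    ring_nf
  have hcC : Filter.Tendsto (fun j => ((c j : ℝ) : ℂ)) Filter.atTop (nhds 0) := by
    have := (Complex.continuous_ofReal.tendsto 0).comp hctend
    exact this
  have hexp : Filter.Tendsto (fun j => s + ((c j : ℝ) : ℂ) - 1) Filter.atTop (nhds (s - 1)) := by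
    have := (hcC.const_add s).sub_const 1
    simpa using this
  have hLHS : Filter.Tendsto (fun j =>
      ∫ x in Ioi (0 : ℝ),
        (x : ℂ) ^ ((s + (c j : ℂ)) - 1) / ∏ k ∈ Finset.Icc 1 (n + 1), ((x : ℂ) + (k : ℂ)))
      Filter.atTop (nhds (∫ x in Ioi (0 : ℝ),
        (x : ℂ) ^ (s - 1) / ∏ k ∈ Finset.Icc 1 (n + 1), ((x : ℂ) + (k : ℂ)))) := by
    refine tendsto_integral_of_dominated_convergence
      (fun x => (1 + x ^ (1/2 : ℝ)) / ∏ k ∈ Finset.Icc 1 (n + 1), (x + (k : ℝ)))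
      (fun j => ((contOn_Hfun n (s + (c j : ℂ))).aestronglyMeasurable measurableSet_Ioi))
      (bound_integrable n hn1) ?_ ?_
    · intro j
      rw [ae_restrict_iff' measurableSet_Ioi]
      refine ae_of_all _ fun x hx => ?_
      have hx0 : (0:ℝ) < x := hx
      rw [norm_Hfun n (s + (c j : ℂ)) hx0]
      have hrexp : (s + (c j : ℂ)).re - 1 = c j := by rw [hre' j]; ring
      rw [hrexp]
      have hnum : x ^ (c j) ≤ 1 + x ^ (1/2 : ℝ) := by
        rcases le_total x 1 with hle | hge
        · have h1 : x ^ (c j) ≤ 1 := Real.rpow_le_one hx0.le hle (hc0 j).le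
          have h2 : (0:ℝ) ≤ x ^ (1/2 : ℝ) := Real.rpow_nonneg hx0.le _
          linarith
        · have h1 : x ^ (c j) ≤ x ^ (1/2 : ℝ) :=
            Real.rpow_le_rpow_of_exponent_le hge (hchalf j)
          linarith
      exact (div_le_div_iff_of_pos_right (prodR_pos hx0)).mpr hnum
    · rw [ae_restrict_iff' measurableSet_Ioi]
      refine ae_of_all _ fun x hx => ?_
      have hx0 : (0:ℝ) < x := hx
      have hbase : ContinuousAt (fun z : ℂ => (x : ℂ) ^ z) (s - 1) :=
        continuousAt_const_cpow (Complex.ofReal_ne_zero.mpr (ne_of_gt hx0))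
      exact (hbase.tendsto.comp hexp).div_const _
  have hsinj : Filter.Tendsto (fun j => Complex.sin ((Real.pi : ℂ) * (s + (c j : ℂ))))
      Filter.atTop (nhds (Complex.sin ((Real.pi : ℂ) * s))) := by
    have h1 : Filter.Tendsto (fun j => (Real.pi : ℂ) * (s + (c j : ℂ)))
        Filter.atTop (nhds ((Real.pi : ℂ) * s)) := by
      have := (hcC.const_add s).const_mul ((Real.pi : ℂ))
      simpa using this
    exact (Complex.continuous_sin.continuousAt.tendsto).comp h1
  have hSig : Filter.Tendsto (fun j => ∑ k ∈ Finset.range (n + 1),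
      (-1 : ℂ) ^ k * (Nat.choose n k : ℂ) * ((k : ℂ) + 1) ^ ((s + (c j : ℂ)) - 1))
      Filter.atTop (nhds (∑ k ∈ Finset.range (n + 1),
      (-1 : ℂ) ^ k * (Nat.choose n k : ℂ) * ((k : ℂ) + 1) ^ (s - 1))) := by
    refine tendsto_finset_sum _ fun k _ => ?_
    have hk1 : (k : ℂ) + 1 ≠ 0 := by
      rw [show (k:ℂ) + 1 = ((k + 1 : ℕ) : ℂ) by push_cast; ring]
      exact Nat.cast_ne_zero.mpr (Nat.succ_ne_zero k)
    have hbase : ContinuousAt (fun z : ℂ => ((k : ℂ) + 1) ^ z) (s - 1) :=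
      continuousAt_const_cpow hk1
    exact (hbase.tendsto.comp hexp).const_mul _
  have hRHS : Filter.Tendsto (fun j =>
      (Real.pi : ℂ) / (Complex.sin ((Real.pi : ℂ) * (s + (c j : ℂ))) * (Nat.factorial n : ℂ)) *
        ∑ k ∈ Finset.range (n + 1), (-1 : ℂ) ^ k * (Nat.choose n k : ℂ) *
          ((k : ℂ) + 1) ^ ((s + (c j : ℂ)) - 1))
      Filter.atTop (nhds ((Real.pi : ℂ) /
        (Complex.sin ((Real.pi : ℂ) * s) * (Nat.factorial n : ℂ)) *
        ∑ k ∈ Finset.range (n + 1), (-1 : ℂ) ^ k * (Nat.choose n k : ℂ) *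
          ((k : ℂ) + 1) ^ (s - 1))) := by
    refine Filter.Tendsto.mul ?_ hSig
    exact Filter.Tendsto.div tendsto_const_nhds (hsinj.mul_const _)
      (mul_ne_zero hsin hfne)
  have hLHS' := hLHS.congr hform
  exact tendsto_nhds_unique hLHS' hRHS

lemma formula_all (m : ℕ) : ∀ n : ℕ, ∀ s : ℂ, 0 < s.re → s.re < (n : ℝ) + 1 →
    s.re < (m : ℝ) + 2 → Complex.sin ((Real.pi : ℂ) * s) ≠ 0 →
    ∫ x in Ioi (0 : ℝ),
        (x : ℂ) ^ (s - 1) / ∏ k ∈ Finset.Icc 1 (n + 1), ((x : ℂ) + (k : ℂ))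
      = (Real.pi : ℂ) / (Complex.sin ((Real.pi : ℂ) * s) * (Nat.factorial n : ℂ)) *
        ∑ k ∈ Finset.range (n + 1), (-1 : ℂ) ^ k * (Nat.choose n k : ℂ) *
          ((k : ℂ) + 1) ^ (s - 1) := by
  induction m with
  | zero =>
    intro n s h0 hn h2 hsin
    rcases eq_or_ne s.re 1 with heq | hne
    · exact formula_boundary n s heq (by rw [heq] at hn; exact hn) hsin
    · exact formula_lt2' n s h0 hn (by push_cast at h2; linarith) hne
  | succ m ih =>
    intro n s h0 hn h2 hsin
    by_cases hlt : s.re < (m : ℝ) + 2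
    · exact ih n s h0 hn hlt hsin
    · push_neg at hlt
      have hs1 : 1 < s.re := by
        have : (0:ℝ) ≤ (m:ℝ) := Nat.cast_nonneg m
        linarith
      cases n with
      | zero =>
        exfalso
        push_cast at hn
        linarith
      | succ k =>
        have hsin' : Complex.sin ((Real.pi : ℂ) * (s - 1)) ≠ 0 := by
          rw [mul_sub, mul_one, Complex.sin_sub_pi]
          exact neg_ne_zero.mpr hsin
        have hr0 : 0 < (s - 1).re := by simp [Complex.sub_re]; linarith
        have hrk : (s - 1).re < (k : ℝ) + 1 := by
          simp only [Complex.sub_re, Complex.one_re]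
          push_cast at hn
          linarith
        have hrm : (s - 1).re < (m : ℝ) + 2 := by
          simp only [Complex.sub_re, Complex.one_re]
          push_cast at h2
          linarith
        exact formula_step k s hs1 (by push_cast at hn ⊢; linarith) hsin
          (ih k (s - 1) hr0 hrk hrm hsin')
          (ih (k + 1) (s - 1) hr0 (by push_cast at hrk ⊢; linarith) hrm hsin')

/-- For `n ≥ 0` and complex `s` with `0 < Re s < n+1` and `sin(πs) ≠ 0`,
`∫_0^∞ x^{s-1} / ∏_{k=1}^{n+1} (x + k) dx
  = (π / (sin(πs) · n!)) · ∑_{k=0}^n (-1)^k C(n,k) (k+1)^{s-1}`. -/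
theorem integral_H_eq (n : ℕ) (s : ℂ) (h0 : 0 < s.re) (hn1 : s.re < n + 1)
    (hsin : Complex.sin ((Real.pi : ℂ) * s) ≠ 0) :
    ∫ x in Set.Ioi (0 : ℝ),
        (x : ℂ) ^ (s - 1) / ∏ k ∈ Finset.Icc 1 (n + 1), ((x : ℂ) + (k : ℂ))
      = (Real.pi : ℂ) / (Complex.sin ((Real.pi : ℂ) * s) * (Nat.factorial n : ℂ)) *
        ∑ k ∈ Finset.range (n + 1), (-1 : ℂ) ^ k * (Nat.choose n k : ℂ) *
          ((k : ℂ) + 1) ^ (s - 1) :=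
  formula_all n n s h0 hn1 (by push_cast at hn1 ⊢; linarith) hsin
end

section
/- Let s be a complex number with Re s > 0 and s ≠ 1. Then the series ∑_{n=0}^{∞} 2^{−(n+1)} · η_n(s) converges and ∑_{n=0}^{∞} 2^{−(n+1)} · ∑_{k=0}^{n} (−1)^{k} · C(n, k) · (k+1)^{−s} = (1 − 2^{1−s}) · ζ(s), where ζ denotes the Riemann zeta function (as analytically continued). -/
open Complex MeasureTheory Set Filter Metric

noncomputable section HasseAux

/-- The inner eta sum `η_n(s)`. -/
def hasseE (n : ℕ) (s : ℂ) : ℂ :=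
  ∑ k ∈ Finset.range (n + 1), (-1 : ℂ) ^ k * (Nat.choose n k : ℂ) * ((k : ℂ) + 1) ^ (-s)

/-- Terms of Hasse's series. -/
def hasseT (n : ℕ) (s : ℂ) : ℂ := (1 / 2 ^ (n + 1) : ℂ) * hasseE n s

/-- `(1 - e^{-t})^n e^{-t}`, as a complex number. -/
def hasseF (n : ℕ) (t : ℝ) : ℂ := (((1 - Real.exp (-t)) ^ n * Real.exp (-t) : ℝ) : ℂ)

/-- `e^{-t}/(1 + e^{-t})`, as a complex number. -/
def etaF (t : ℝ) : ℂ := ((Real.exp (-t) / (1 + Real.exp (-t)) : ℝ) : ℂ)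

lemma hasse_key (n : ℕ) (t : ℝ) : ((1 - Real.exp (-t)) ^ n * Real.exp (-t) : ℝ)
    = ∑ k ∈ Finset.range (n + 1),
        (-1 : ℝ) ^ k * (Nat.choose n k : ℝ) * Real.exp (-(((k : ℝ) + 1) * t)) := by
  rw [sub_eq_add_neg, add_comm, add_pow, Finset.sum_mul]
  refine Finset.sum_congr rfl fun k hk => ?_
  have h1 : Real.exp (-(((k : ℝ) + 1) * t)) = Real.exp (-t) ^ (k + 1) := by
    rw [← Real.exp_nat_mul]
    congr 1
    push_cast
    ring
  rw [h1, one_pow, neg_pow, pow_succ]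
  ring

lemma hasse_mellin_hasSum (n : ℕ) {s : ℂ} (hs : 0 < s.re) :
    HasSum (fun k : Fin (n + 1) =>
        Complex.Gamma s * ((-1 : ℂ) ^ (k : ℕ) * (Nat.choose n k : ℂ)) /
          ((((k : ℕ) : ℝ) + 1 : ℝ) : ℂ) ^ s)
      (mellin (hasseF n) s) := by
  refine hasSum_mellin (fun i => Or.inr (by positivity)) hs (fun t ht => ?_) ?_
  · have h := hasSum_fintype (fun k : Fin (n + 1) =>
      ((-1 : ℂ) ^ (k : ℕ) * (Nat.choose n k : ℂ)) * (Real.exp (-(((k : ℕ) : ℝ) + 1) * t) : ℝ))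
    convert h using 2
    rw [hasseF, hasse_key n t, Fin.sum_univ_eq_sum_range
      (fun k : ℕ => ((-1 : ℂ) ^ k * (Nat.choose n k : ℂ)) * (Real.exp (-((k : ℝ) + 1) * t) : ℝ))]
    push_cast
    refine Finset.sum_congr rfl fun k hk => ?_
    ring_nf
  · exact (hasSum_fintype _).summable

lemma hasse_mellin_eq (n : ℕ) {s : ℂ} (hs : 0 < s.re) :
    mellin (hasseF n) s = Complex.Gamma s * hasseE n s := by
  have h := (hasse_mellin_hasSum n hs).tsum_eq
  rw [tsum_fintype] at h
  rw [← h, hasseE, Finset.mul_sum, Fin.sum_univ_eq_sum_range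
    (fun k : ℕ => Complex.Gamma s * ((-1 : ℂ) ^ k * (Nat.choose n k : ℂ)) /
      (((k : ℝ) + 1 : ℝ) : ℂ) ^ s)]
  refine Finset.sum_congr rfl fun k hk => ?_
  rw [Complex.cpow_neg]
  push_cast
  rw [div_eq_mul_inv]
  ring

end HasseAux

noncomputable section HasseAux2

lemma hasse_exp_bounds {t : ℝ} (ht : 0 < t) :
    0 < Real.exp (-t) ∧ Real.exp (-t) < 1 := by
  constructor
  · positivity
  · rw [Real.exp_lt_one_iff]
    linarith

lemma hasse_integrand_norm (n : ℕ) (s : ℂ) {t : ℝ} (ht : 0 < t) :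
    ‖(t : ℂ) ^ (s - 1) * hasseF n t‖ ≤ Real.exp (-t) * t ^ (s.re - 1) := by
  obtain ⟨hx0, hx1⟩ := hasse_exp_bounds ht
  have h2 : ‖(t : ℂ) ^ (s - 1)‖ = t ^ (s.re - 1) := by
    rw [Complex.norm_cpow_eq_rpow_re_of_pos ht, Complex.sub_re,
      Complex.one_re]
  have h3 : ‖hasseF n t‖ ≤ Real.exp (-t) := by
    rw [hasseF, Complex.norm_real, Real.norm_eq_abs,
      _root_.abs_of_nonneg (mul_nonneg (pow_nonneg (by linarith) _) hx0.le)]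
    calc (1 - Real.exp (-t)) ^ n * Real.exp (-t) ≤ 1 * Real.exp (-t) :=
        mul_le_mul_of_nonneg_right (pow_le_one₀ (by linarith) (by linarith)) hx0.le
      _ = Real.exp (-t) := one_mul _
  calc ‖(t : ℂ) ^ (s - 1) * hasseF n t‖ = ‖(t : ℂ) ^ (s - 1)‖ * ‖hasseF n t‖ := norm_mul _ _
    _ ≤ t ^ (s.re - 1) * Real.exp (-t) := by
        rw [h2]; exact mul_le_mul_of_nonneg_left h3 (Real.rpow_nonneg ht.le _)
    _ = Real.exp (-t) * t ^ (s.re - 1) := mul_comm _ _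

lemma hasse_integrable (n : ℕ) {s : ℂ} (hs : 0 < s.re) :
    IntegrableOn (fun t : ℝ => (t : ℂ) ^ (s - 1) * hasseF n t) (Ioi 0) := by
  refine Integrable.mono' (Real.GammaIntegral_convergent hs) ?_ ?_
  · refine ContinuousOn.aestronglyMeasurable ?_ measurableSet_Ioi
    refine ContinuousOn.mul ?_ ?_
    · intro t ht
      exact (Complex.continuousAt_ofReal_cpow_const t (s - 1)
        (Or.inr (ne_of_gt ht))).continuousWithinAt
    · refine Continuous.continuousOn ?_
      exact Complex.continuous_ofReal.comp (by continuity)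
  · rw [ae_restrict_iff' measurableSet_Ioi]
    exact Filter.Eventually.of_forall fun t ht => hasse_integrand_norm n s ht

lemma hasse_norm_integral_le (n : ℕ) {s : ℂ} (hs : 0 < s.re) :
    ∫ t in Ioi (0:ℝ), ‖(t : ℂ) ^ (s - 1) * hasseF n t‖ ≤ Real.Gamma s.re := by
  rw [Real.Gamma_eq_integral hs]
  refine setIntegral_mono_on (hasse_integrable n hs).norm
    (Real.GammaIntegral_convergent hs) measurableSet_Ioi ?_
  exact fun t ht => hasse_integrand_norm n s ht

lemma hasse_pointwise_geom {s : ℂ} {t : ℝ} (ht : 0 < t) :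
    HasSum (fun n : ℕ => (1 / 2 : ℂ) ^ (n + 1) * ((t : ℂ) ^ (s - 1) * hasseF n t))
      ((t : ℂ) ^ (s - 1) * etaF t) := by
  obtain ⟨hx0, hx1⟩ := hasse_exp_bounds ht
  set x := Real.exp (-t) with hx
  have hq0 : (0:ℝ) ≤ (1 - x) / 2 := by linarith
  have hq1 : (1 - x) / 2 < 1 := by linarith
  have hne : (1 : ℝ) + x ≠ 0 := by positivity
  have hgeom := (hasSum_geometric_of_lt_one hq0 hq1).mul_left (x / 2)
  have h2 : (fun n : ℕ => x / 2 * ((1 - x) / 2) ^ n)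
      = fun n : ℕ => (1 / 2 : ℝ) ^ (n + 1) * ((1 - x) ^ n * x) := by
    funext n
    rw [div_pow, div_pow, one_pow, pow_succ]
    ring
  have h3 : x / 2 * (1 - (1 - x) / 2)⁻¹ = x / (1 + x) := by
    rw [show (1 : ℝ) - (1 - x) / 2 = (1 + x) / 2 by ring]
    field_simp
  have hre : HasSum (fun n : ℕ => (1 / 2 : ℝ) ^ (n + 1) * ((1 - x) ^ n * x))
      (x / (1 + x)) := by
    rw [h2, h3] at hgeom
    exact hgeom
  have hco := Complex.ofRealCLM.hasSum hre
  have heq : (fun n : ℕ => Complex.ofRealCLM ((1 / 2 : ℝ) ^ (n + 1) * ((1 - x) ^ n * x)))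
      = fun n : ℕ => (1 / 2 : ℂ) ^ (n + 1) * hasseF n t := by
    funext n
    simp only [Complex.ofRealCLM_apply, hasseF, hx, Complex.ofReal_mul, Complex.ofReal_pow]
    push_cast
    ring
  rw [heq] at hco
  have hfin := hco.mul_left ((t : ℂ) ^ (s - 1))
  have hfe : (fun n : ℕ => (t : ℂ) ^ (s - 1) * ((1 / 2 : ℂ) ^ (n + 1) * hasseF n t))
      = fun n : ℕ => (1 / 2 : ℂ) ^ (n + 1) * ((t : ℂ) ^ (s - 1) * hasseF n t) := by
    funext n; ring
  rw [hfe] at hfin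
  convert hfin using 2
  all_goals exact rfl

end HasseAux2

noncomputable section HasseAux3

lemma hasse_hasSum_gamma {s : ℂ} (hs : 0 < s.re) :
    HasSum (fun n : ℕ => Complex.Gamma s * hasseT n s) (mellin etaF s) := by
  have hint : ∀ n : ℕ, Integrable
      (fun t : ℝ => (1 / 2 : ℂ) ^ (n + 1) * ((t : ℂ) ^ (s - 1) * hasseF n t))
      (volume.restrict (Ioi 0)) :=
    fun n => ((hasse_integrable n hs).const_mul _)
  have hnorm : Summable (fun n : ℕ =>
      ∫ t in Ioi (0:ℝ), ‖(1 / 2 : ℂ) ^ (n + 1) * ((t : ℂ) ^ (s - 1) * hasseF n t)‖) := by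
    have hb : ∀ n : ℕ,
        ∫ t in Ioi (0:ℝ), ‖(1 / 2 : ℂ) ^ (n + 1) * ((t : ℂ) ^ (s - 1) * hasseF n t)‖
          ≤ (1 / 2 : ℝ) ^ (n + 1) * Real.Gamma s.re := by
      intro n
      have : ∀ t : ℝ, ‖(1 / 2 : ℂ) ^ (n + 1) * ((t : ℂ) ^ (s - 1) * hasseF n t)‖
          = (1 / 2 : ℝ) ^ (n + 1) * ‖(t : ℂ) ^ (s - 1) * hasseF n t‖ := by
        intro t
        rw [norm_mul, norm_pow]
        norm_num
      simp_rw [this]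
      rw [integral_const_mul]
      have := hasse_norm_integral_le n hs
      have hp : (0:ℝ) ≤ (1 / 2 : ℝ) ^ (n + 1) := by positivity
      exact mul_le_mul_of_nonneg_left this hp
    refine Summable.of_nonneg_of_le
      (fun n => integral_nonneg fun t => norm_nonneg _) hb ?_
    exact ((summable_geometric_of_lt_one (by norm_num : (0:ℝ) ≤ 1/2)
      (by norm_num)).mul_right (Real.Gamma s.re / 2)).congr
      fun n => by rw [pow_succ]; ring
  have key := hasSum_integral_of_summable_integral_norm hint hnorm
  have h1 : ∀ n : ℕ, ∫ t in Ioi (0:ℝ), (1 / 2 : ℂ) ^ (n + 1) * ((t : ℂ) ^ (s - 1) * hasseF n t)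
      = Complex.Gamma s * hasseT n s := by
    intro n
    rw [integral_const_mul]
    have hm : ∫ t in Ioi (0:ℝ), (t : ℂ) ^ (s - 1) * hasseF n t = mellin (hasseF n) s := by
      rw [mellin]
      simp_rw [smul_eq_mul]
    rw [hm, hasse_mellin_eq n hs, hasseT]
    rw [show (1 / 2 : ℂ) ^ (n + 1) = (1 / 2 ^ (n + 1) : ℂ) by rw [div_pow, one_pow]]
    ring
  have h2 : ∫ t in Ioi (0:ℝ),
      (∑' n : ℕ, (1 / 2 : ℂ) ^ (n + 1) * ((t : ℂ) ^ (s - 1) * hasseF n t)) = mellin etaF s := by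
    rw [mellin]
    refine setIntegral_congr_fun measurableSet_Ioi fun t ht => ?_
    rw [(hasse_pointwise_geom (s := s) ht).tsum_eq, smul_eq_mul]
  rw [← h2]
  exact funext h1 ▸ key

noncomputable section HasseAux4

lemma hasse_summable_cpow {s : ℂ} (hs : 1 < s.re) :
    Summable (fun k : ℕ => ((k : ℂ) + 1) ^ (-s)) := by
  apply Summable.of_norm
  have h1 : ∀ k : ℕ, ‖((k : ℂ) + 1) ^ (-s)‖ = 1 / ((k : ℝ) + 1) ^ s.re := by
    intro k
    have hk : (0:ℝ) < (k : ℝ) + 1 := by positivity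
    rw [show ((k : ℂ) + 1) = (((k : ℝ) + 1 : ℝ) : ℂ) by push_cast; ring,
      Complex.norm_cpow_eq_rpow_re_of_pos hk, Complex.neg_re,
      Real.rpow_neg hk.le, one_div]
  simp_rw [h1]
  have h2 := (summable_nat_add_iff 1).2 (Real.summable_one_div_nat_rpow.2 hs)
  refine h2.congr fun k => ?_
  push_cast
  ring_nf

lemma hasse_eta_hasSum {s : ℂ} (hs : 1 < s.re) :
    HasSum (fun k : ℕ => (-1 : ℂ) ^ k * ((k : ℂ) + 1) ^ (-s))
      ((1 - (2 : ℂ) ^ (1 - s)) * riemannZeta s) := by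
  have hsum := hasse_summable_cpow hs
  have hZ : HasSum (fun k : ℕ => ((k : ℂ) + 1) ^ (-s)) (riemannZeta s) := by
    have h1 : (fun k : ℕ => ((k : ℂ) + 1) ^ (-s)) = fun k : ℕ => 1 / ((k : ℂ) + 1) ^ s := by
      funext k
      rw [Complex.cpow_neg, one_div]
    rw [zeta_eq_tsum_one_div_nat_add_one_cpow hs, ← h1]
    exact hsum.hasSum
  have hodd : HasSum (fun k : ℕ => (((2 * k + 1 : ℕ) : ℂ) + 1) ^ (-s))
      ((2 : ℂ) ^ (-s) * riemannZeta s) := by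
    have h2 := hZ.mul_left ((2 : ℂ) ^ (-s))
    have he : (fun k : ℕ => (2 : ℂ) ^ (-s) * (((k : ℕ) : ℂ) + 1) ^ (-s))
        = fun k : ℕ => (((2 * k + 1 : ℕ) : ℂ) + 1) ^ (-s) := by
      funext k
      have hcast : (((2 * k + 1 : ℕ) : ℂ) + 1) = ((2 : ℝ) : ℂ) * ((((k : ℝ) + 1) : ℝ) : ℂ) := by
        push_cast; ring
      rw [hcast, Complex.mul_cpow_ofReal_nonneg (by norm_num) (by positivity)]
      norm_cast
    rwa [he] at h2
  have hevens : Summable (fun k : ℕ => (((2 * k : ℕ) : ℂ) + 1) ^ (-s)) :=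
    hsum.comp_injective (fun a b h => by omega)
  obtain ⟨A, hA⟩ := hevens
  have htot : HasSum (fun k : ℕ => ((k : ℂ) + 1) ^ (-s)) (A + (2 : ℂ) ^ (-s) * riemannZeta s) :=
    HasSum.even_add_odd hA hodd
  have hAval : A = riemannZeta s - (2 : ℂ) ^ (-s) * riemannZeta s := by
    have := htot.unique hZ
    linear_combination this
  have hFeven : HasSum (fun k : ℕ => (-1 : ℂ) ^ (2 * k) * (((2 * k : ℕ) : ℂ) + 1) ^ (-s)) A := by
    have he : (fun k : ℕ => (-1 : ℂ) ^ (2 * k) * (((2 * k : ℕ) : ℂ) + 1) ^ (-s))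
        = fun k : ℕ => (((2 * k : ℕ) : ℂ) + 1) ^ (-s) := by
      funext k
      rw [pow_mul]
      norm_num
    rwa [he]
  have hFodd : HasSum (fun k : ℕ => (-1 : ℂ) ^ (2 * k + 1) * (((2 * k + 1 : ℕ) : ℂ) + 1) ^ (-s))
      (-((2 : ℂ) ^ (-s) * riemannZeta s)) := by
    have he : (fun k : ℕ => (-1 : ℂ) ^ (2 * k + 1) * (((2 * k + 1 : ℕ) : ℂ) + 1) ^ (-s))
        = fun k : ℕ => -((((2 * k + 1 : ℕ) : ℂ) + 1) ^ (-s)) := by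
      funext k
      rw [pow_succ, pow_mul]
      norm_num
    rw [he]
    exact hodd.neg
  have hfinal : HasSum (fun k : ℕ => (-1 : ℂ) ^ k * ((k : ℂ) + 1) ^ (-s))
      (A + -((2 : ℂ) ^ (-s) * riemannZeta s)) := HasSum.even_add_odd hFeven hFodd
  have h2s : (2 : ℂ) ^ (1 - s) = 2 * (2 : ℂ) ^ (-s) := by
    rw [show (1 : ℂ) - s = 1 + (-s) by ring,
      Complex.cpow_add _ _ (by norm_num : (2:ℂ) ≠ 0), Complex.cpow_one]
  have hval : A + -((2 : ℂ) ^ (-s) * riemannZeta s)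
      = (1 - (2 : ℂ) ^ (1 - s)) * riemannZeta s := by
    rw [hAval, h2s]; ring
  rwa [hval] at hfinal

end HasseAux4

noncomputable section HasseAux5

lemma hasse_mellin_etaF {s : ℂ} (hs : 1 < s.re) :
    mellin etaF s = Complex.Gamma s * ((1 - (2 : ℂ) ^ (1 - s)) * riemannZeta s) := by
  have hs0 : 0 < s.re := lt_trans one_pos hs
  have hmel : HasSum (fun k : ℕ =>
      Complex.Gamma s * (-1 : ℂ) ^ k / ((((k : ℝ) + 1) : ℝ) : ℂ) ^ s) (mellin etaF s) := by
    refine hasSum_mellin (a := fun k : ℕ => (-1 : ℂ) ^ k) (p := fun k : ℕ => (k : ℝ) + 1)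
      (fun k => Or.inr (by positivity)) hs0 (fun t ht => ?_) ?_
    · have hx0 : 0 < Real.exp (-t) := Real.exp_pos _
      have hx1 : Real.exp (-t) < 1 := (hasse_exp_bounds ht).2
      have hnorm : ‖-((Real.exp (-t) : ℝ) : ℂ)‖ < 1 := by
        rw [norm_neg, Complex.norm_real, Real.norm_eq_abs, _root_.abs_of_pos hx0]
        exact hx1
      have hgeom := (hasSum_geometric_of_norm_lt_one hnorm).mul_left
        ((Real.exp (-t) : ℝ) : ℂ)
      have he : (fun k : ℕ => ((Real.exp (-t) : ℝ) : ℂ) * (-((Real.exp (-t) : ℝ) : ℂ)) ^ k)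
          = fun k : ℕ => (-1 : ℂ) ^ k * ((Real.exp (-((k : ℝ) + 1) * t) : ℝ) : ℂ) := by
        funext k
        have h1 : Real.exp (-((k : ℝ) + 1) * t) = Real.exp (-t) ^ (k + 1) := by
          rw [← Real.exp_nat_mul]; congr 1; push_cast; ring
        rw [h1, neg_pow]
        push_cast
        rw [pow_succ]
        ring
      rw [he] at hgeom
      have hval : ((Real.exp (-t) : ℝ) : ℂ) * (1 - -((Real.exp (-t) : ℝ) : ℂ))⁻¹ = etaF t := by
        rw [etaF, sub_neg_eq_add, Complex.ofReal_div, div_eq_mul_inv]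
        push_cast
        ring_nf
      rw [hval] at hgeom
      exact hgeom
    · have h2 := (summable_nat_add_iff 1).2 (Real.summable_one_div_nat_rpow.2 hs)
      refine h2.congr fun k => ?_
      simp only [norm_pow, norm_neg, norm_one, one_pow]
      push_cast
      ring_nf
  have hmul := (hasse_eta_hasSum hs).mul_left (Complex.Gamma s)
  have he2 : (fun k : ℕ => Complex.Gamma s * ((-1 : ℂ) ^ k * ((k : ℂ) + 1) ^ (-s)))
      = fun k : ℕ => Complex.Gamma s * (-1 : ℂ) ^ k / ((((k : ℝ) + 1) : ℝ) : ℂ) ^ s := by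
    funext k
    rw [div_eq_mul_inv, Complex.cpow_neg]
    push_cast
    ring
  rw [he2] at hmul
  exact hmel.unique hmul

end HasseAux5

noncomputable section HasseAux6

def hassePsi : ℂ → ℂ := fun z => Complex.Gamma z * ((1 - (2 : ℂ) ^ (1 - z)) * riemannZeta z)

def hasseU : Set ℂ := {z : ℂ | 0 < z.re ∧ z ≠ 1}

lemma hasseU_open : IsOpen hasseU :=
  (isOpen_lt continuous_const Complex.continuous_re).inter isOpen_compl_singleton

lemma hasse_gamma_ne_zero {z : ℂ} (hz : 0 < z.re) : Complex.Gamma z ≠ 0 := by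
  apply Complex.Gamma_ne_zero
  intro m hm
  rw [hm] at hz
  simp only [Complex.neg_re, Complex.natCast_re] at hz
  have : (0:ℝ) ≤ (m:ℝ) := Nat.cast_nonneg m
  linarith

lemma hasse_etaF_continuous : Continuous etaF := by
  refine Complex.continuous_ofReal.comp ?_
  refine Continuous.div (by continuity) (by continuity) fun t => ?_
  have := Real.exp_pos (-t)
  positivity

lemma hasse_mellin_diff : ∀ z ∈ hasseU, DifferentiableAt ℂ (mellin etaF) z := by
  intro z hz
  refine mellin_differentiableAt_of_isBigO_rpow (a := z.re + 1) (b := 0)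
    (hasse_etaF_continuous.continuousOn.locallyIntegrableOn measurableSet_Ioi)
    ?_ (by linarith) ?_ hz.1
  · refine Asymptotics.IsBigO.trans ?_ (isLittleO_exp_neg_mul_rpow_atTop one_pos _).isBigO
    refine Asymptotics.IsBigO.of_bound 1 ?_
    filter_upwards with t
    have he := Real.exp_pos (-t)
    rw [one_mul, neg_one_mul, etaF, Complex.norm_real, Real.norm_eq_abs, Real.norm_eq_abs,
      _root_.abs_of_pos (Real.exp_pos _),
      _root_.abs_of_nonneg (div_nonneg he.le (by positivity))]
    exact div_le_self he.le (by linarith)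
  · refine Asymptotics.IsBigO.of_bound 1 ?_
    filter_upwards with t
    have he := Real.exp_pos (-t)
    rw [neg_zero, Real.rpow_zero, etaF, Complex.norm_real, Real.norm_eq_abs, Real.norm_eq_abs,
      _root_.abs_of_nonneg (div_nonneg he.le (by positivity))]
    rw [abs_one, one_mul]
    rw [div_le_one (by positivity)]
    linarith

lemma hasse_psi_diff : ∀ z ∈ hasseU, DifferentiableAt ℂ hassePsi z := by
  intro z hz
  have h1 : DifferentiableAt ℂ Complex.Gamma z := by
    refine Complex.differentiableAt_Gamma z fun m hm => ?_
    have := hz.1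
    rw [hm] at this
    simp only [Complex.neg_re, Complex.natCast_re] at this
    have h0 : (0:ℝ) ≤ (m:ℝ) := Nat.cast_nonneg m
    linarith
  have h2 : DifferentiableAt ℂ (fun z : ℂ => (2 : ℂ) ^ (1 - z)) z :=
    ((differentiableAt_const (1:ℂ)).sub differentiableAt_id).const_cpow
      (Or.inl (by norm_num))
  exact h1.mul (((differentiableAt_const 1).sub h2).mul (differentiableAt_riemannZeta hz.2))

lemma hasse_ana_mellin : AnalyticOnNhd ℂ (mellin etaF) hasseU := by
  have hd : DifferentiableOn ℂ (mellin etaF) hasseU :=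
    fun z hz => (hasse_mellin_diff z hz).differentiableWithinAt
  exact hd.analyticOnNhd hasseU_open

lemma hasse_ana_psi : AnalyticOnNhd ℂ hassePsi hasseU := by
  have hd : DifferentiableOn ℂ hassePsi hasseU :=
    fun z hz => (hasse_psi_diff z hz).differentiableWithinAt
  exact hd.analyticOnNhd hasseU_open

lemma hasse_eqOn_gt1 : ∀ z : ℂ, 1 < z.re → mellin etaF z = hassePsi z :=
  fun _ hz => hasse_mellin_etaF hz

lemma hasse_eqOn_upper :
    Set.EqOn (mellin etaF) hassePsi {z : ℂ | 0 < z.re ∧ 0 < z.im} := by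
  have hsub : {z : ℂ | 0 < z.re ∧ 0 < z.im} ⊆ hasseU := by
    intro z hz
    refine ⟨hz.1, fun h => ?_⟩
    rw [h] at hz
    simp only [Set.mem_setOf_eq, Complex.one_im, lt_irrefl] at hz
    exact hz.2
  have hconv : Convex ℝ {z : ℂ | 0 < z.re ∧ 0 < z.im} :=
    (convex_halfSpace_re_gt 0).inter (convex_halfSpace_im_gt 0)
  have hz₀ : ((2:ℂ) + Complex.I) ∈ {z : ℂ | 0 < z.re ∧ 0 < z.im} := by
    constructor <;> simp
  have hmem : {z : ℂ | 1 < z.re} ∈ nhds ((2:ℂ) + Complex.I) :=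
    (isOpen_lt continuous_const Complex.continuous_re).mem_nhds
      (by norm_num [Set.mem_setOf_eq, Complex.add_re] :
        ((2:ℂ) + Complex.I) ∈ {z : ℂ | 1 < z.re})
  exact (hasse_ana_mellin.mono hsub).eqOn_of_preconnected_of_eventuallyEq
    (hasse_ana_psi.mono hsub) hconv.isPreconnected hz₀
    (Filter.eventuallyEq_of_mem hmem fun z hz => hasse_eqOn_gt1 z hz)

lemma hasse_eqOn_lower :
    Set.EqOn (mellin etaF) hassePsi {z : ℂ | 0 < z.re ∧ z.im < 0} := by
  have hsub : {z : ℂ | 0 < z.re ∧ z.im < 0} ⊆ hasseU := by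
    intro z hz
    refine ⟨hz.1, fun h => ?_⟩
    rw [h] at hz
    simp only [Set.mem_setOf_eq, Complex.one_im, lt_irrefl] at hz
    exact hz.2
  have hconv : Convex ℝ {z : ℂ | 0 < z.re ∧ z.im < 0} :=
    (convex_halfSpace_re_gt 0).inter (convex_halfSpace_im_lt 0)
  have hz₀ : ((2:ℂ) - Complex.I) ∈ {z : ℂ | 0 < z.re ∧ z.im < 0} := by
    constructor <;> simp
  have hmem : {z : ℂ | 1 < z.re} ∈ nhds ((2:ℂ) - Complex.I) :=
    (isOpen_lt continuous_const Complex.continuous_re).mem_nhds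
      (by norm_num [Set.mem_setOf_eq, Complex.sub_re] :
        ((2:ℂ) - Complex.I) ∈ {z : ℂ | 1 < z.re})
  exact (hasse_ana_mellin.mono hsub).eqOn_of_preconnected_of_eventuallyEq
    (hasse_ana_psi.mono hsub) hconv.isPreconnected hz₀
    (Filter.eventuallyEq_of_mem hmem fun z hz => hasse_eqOn_gt1 z hz)

end HasseAux6

noncomputable section HasseAux7

lemma hasse_mellin_etaF' {s : ℂ} (hs : 0 < s.re) (hs1 : s ≠ 1) :
    mellin etaF s = hassePsi s := by
  rcases lt_or_ge 1 s.re with hgt | hle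
  · exact hasse_eqOn_gt1 s hgt
  set r : ℝ := min s.re (dist s 1) / 2 with hr
  have hd1 : 0 < dist s 1 := dist_pos.2 hs1
  have hrpos : 0 < r := by
    rw [hr]
    have := lt_min hs hd1
    positivity
  have hr1 : r ≤ s.re / 2 := by
    rw [hr]
    have := min_le_left s.re (dist s 1)
    linarith
  have hr2 : r ≤ dist s 1 / 2 := by
    rw [hr]
    have := min_le_right s.re (dist s 1)
    linarith
  have hball : ball s r ⊆ hasseU := by
    intro z hz
    rw [mem_ball] at hz
    constructor
    · have h1 : |z.re - s.re| ≤ dist z s := by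
        rw [Complex.dist_eq, ← Complex.sub_re]
        exact Complex.abs_re_le_norm _
      have h2 := neg_abs_le (z.re - s.re)
      linarith
    · intro hz1
      rw [hz1, dist_comm] at hz
      linarith
  have hQopenU : IsOpen {z : ℂ | 0 < z.re ∧ 0 < z.im} :=
    (isOpen_lt continuous_const Complex.continuous_re).inter
      (isOpen_lt continuous_const Complex.continuous_im)
  have hQopenL : IsOpen {z : ℂ | 0 < z.re ∧ z.im < 0} :=
    (isOpen_lt continuous_const Complex.continuous_re).inter
      (isOpen_lt Complex.continuous_im continuous_const)
  rcases le_or_gt 0 s.im with him | him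
  · set z₁ : ℂ := s + (r/2 : ℝ) * Complex.I with hz₁
    have hz₁re : z₁.re = s.re := by simp [hz₁]
    have hz₁im : z₁.im = s.im + r/2 := by simp [hz₁]
    have hz₁ball : z₁ ∈ ball s r := by
      rw [mem_ball, Complex.dist_eq, hz₁, add_sub_cancel_left, norm_mul, Complex.norm_real,
        Real.norm_eq_abs, Complex.norm_I, mul_one, _root_.abs_of_pos (by positivity)]
      linarith
    have hz₁Q : z₁ ∈ {z : ℂ | 0 < z.re ∧ 0 < z.im} := by
      refine ⟨?_, ?_⟩
      · rw [hz₁re]; exact hs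
      · rw [hz₁im]; linarith
    have heq := (hasse_ana_mellin.mono hball).eqOn_of_preconnected_of_eventuallyEq
      (hasse_ana_psi.mono hball) (convex_ball s r).isPreconnected hz₁ball
      (Filter.eventuallyEq_of_mem (hQopenU.mem_nhds hz₁Q) hasse_eqOn_upper)
    exact heq (mem_ball_self hrpos)
  · set z₁ : ℂ := s - (r/2 : ℝ) * Complex.I with hz₁
    have hz₁re : z₁.re = s.re := by simp [hz₁]
    have hz₁im : z₁.im = s.im - r/2 := by simp [hz₁]
    have hz₁ball : z₁ ∈ ball s r := by
      rw [mem_ball, Complex.dist_eq, hz₁, sub_sub_cancel_left, norm_neg, norm_mul,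
        Complex.norm_real, Real.norm_eq_abs, Complex.norm_I, mul_one, _root_.abs_of_pos (by positivity)]
      linarith
    have hz₁Q : z₁ ∈ {z : ℂ | 0 < z.re ∧ z.im < 0} := by
      refine ⟨?_, ?_⟩
      · rw [hz₁re]; exact hs
      · rw [hz₁im]; linarith
    have heq := (hasse_ana_mellin.mono hball).eqOn_of_preconnected_of_eventuallyEq
      (hasse_ana_psi.mono hball) (convex_ball s r).isPreconnected hz₁ball
      (Filter.eventuallyEq_of_mem (hQopenL.mem_nhds hz₁Q) hasse_eqOn_lower)
    exact heq (mem_ball_self hrpos)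

end HasseAux7

/-- Hasse's series: for `Re s > 0`, `s ≠ 1`, the series `∑_n 2^{-(n+1)} η_n(s)` converges
to the Dirichlet eta function `(1 - 2^{1-s}) ζ(s)`. -/
theorem hasse_series_eta (s : ℂ) (hs : 0 < s.re) (hs1 : s ≠ 1) :
    HasSum
      (fun n : ℕ => (1 / 2 ^ (n + 1) : ℂ) *
        ∑ k ∈ Finset.range (n + 1), (-1 : ℂ) ^ k * (Nat.choose n k : ℂ) * ((k : ℂ) + 1) ^ (-s))
      ((1 - (2 : ℂ) ^ (1 - s)) * riemannZeta s) := by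
  have hA := hasse_hasSum_gamma hs
  rw [hasse_mellin_etaF' hs hs1, hassePsi] at hA
  have hG : Complex.Gamma s ≠ 0 := hasse_gamma_ne_zero hs
  have hB := hA.mul_left (Complex.Gamma s)⁻¹
  have he : (fun n : ℕ => (Complex.Gamma s)⁻¹ * (Complex.Gamma s * hasseT n s))
      = fun n : ℕ => hasseT n s := by
    funext n
    rw [← mul_assoc, inv_mul_cancel₀ hG, one_mul]
  rw [he, ← mul_assoc, inv_mul_cancel₀ hG, one_mul] at hB
  exact hB
end HasseAux3
end

section
/- Let A be an associative unital algebra over ℂ, let a, b ∈ A and u ∈ ℂ satisfy b*a − a*b = u•1. Then for every natural number n, there exists c ∈ A such that b^n * a^n = (n! · u^n)•1 + c*b; that is, b^n a^n ≡ u^n·n! modulo the vacuum left module Ψb = {x*b : x ∈ A}. -/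
/-- In a unital associative ℂ-algebra with the Weyl relation `ba - ab = u·1`,
for every `n`, `bⁿ aⁿ ≡ n! uⁿ · 1` modulo the vacuum left module `Ψb`
(the set of left multiples of `b`). -/
theorem weyl_norm_particle_states {A : Type*} [Ring A] [Algebra ℂ A] (a b : A) (u : ℂ)
    (h : b * a - a * b = u • (1 : A)) (n : ℕ) :
    ∃ c : A, b ^ n * a ^ n = ((Nat.factorial n : ℂ) * u ^ n) • (1 : A) + c * b := by
  have hba : b * a = a * b + u • (1 : A) := by
    rw [← h]; abel
  have comm : ∀ m : ℕ, b ^ (m + 1) * a = a * b ^ (m + 1) + (((m : ℂ) + 1) * u) • b ^ m := by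
    intro m
    induction m with
    | zero => simpa using hba
    | succ k ih =>
      have h1 : b ^ (k + 2) * a = b * (b ^ (k + 1) * a) := by
        rw [← mul_assoc, ← pow_succ']
      rw [h1, ih, mul_add, ← mul_assoc, hba, mul_smul_comm]
      simp only [add_mul, smul_mul_assoc, one_mul, ← pow_succ']
      rw [mul_assoc, ← pow_succ']
      push_cast
      match_scalars <;> ring
  induction n with
  | zero => exact ⟨0, by simp⟩
  | succ k ih =>
    obtain ⟨c, hc⟩ := ih
    refine ⟨((Nat.factorial k : ℂ) * u ^ k) • a + a * (b * c) + (((k : ℂ) + 1) * u) • c, ?_⟩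
    have h1 : b ^ (k + 1) * a ^ (k + 1) = (b ^ (k + 1) * a) * a ^ k := by
      rw [mul_assoc, ← pow_succ']
    have h2 : b ^ (k + 1) * a ^ k = b * (b ^ k * a ^ k) := by
      rw [← mul_assoc, ← pow_succ']
    rw [h1, comm k, add_mul, mul_assoc a, h2, smul_mul_assoc, hc, Nat.factorial_succ]
    push_cast
    simp only [mul_add, add_mul, mul_smul_comm, smul_mul_assoc, smul_add, smul_smul,
      mul_one, one_mul, mul_assoc]
    match_scalars <;> ring
end
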